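/- arXiv:2010.09243 — 6 statements merged into one kernel-verified Lean document; each statement's English description precedes it below -/
import Mathlib

section
/- Let (G, M) and (H, N) be good admissible cocycles over the same data (K, ι, ξ, F). For all i, j write a_{i0}, a_{i1} for the (1,1) and (2,1) entries of M i and g_{ij,11}, g_{ij,21} for the (1,1) and (2,1) entries of G i j, and define G~ i j := a_{i1}⁻¹ · ((a_{i1}·g_{ij,11} − a_{i0}·g_{ij,21})·Id + g_{ij,21}·(N i)) · (H i j). Then: every G~ i j is invertible with det(G~ i j) = a_{j1}·det(G i j)·det(H i j) / (a_{i1} · ξ i j); G~ i i = Id; (G~ i j)·(G~ j k) = G~ i k for all i, j, k; and N j = (ξ i j)·(G~ i j)⁻¹·(N i)·(G~ i j) for all i, j. That is, (G~, N) is again an admissible cocycle. -/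
/-- The combinatorial data underlying admissible pairs on a double cover: a field `K`,
an index type `ι`, transition scalars `ξ i j` (nonzero, normalized, cocycle) and local
equations `F i` of the branch locus (transforming by `ξ²`, not squares in `K`). -/
structure AdmissibleData (K : Type*) [Field K] (ι : Type*) where
  ξ : ι → ι → K
  F : ι → K
  ξ_ne : ∀ i j, ξ i j ≠ 0
  ξ_diag : ∀ i, ξ i i = 1
  ξ_mul : ∀ i j k, ξ i j * ξ j k = ξ i k
  F_transf : ∀ i j, F j = (ξ i j) ^ 2 * F i
  F_not_sq : ∀ i, ¬ ∃ c : K, c ^ 2 = F i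

/-- An admissible cocycle over the data `D`: transition matrices `G i j` (invertible,
normalized, cocycle) together with trace-zero matrices `M i` squaring to `F i • Id` and
transforming by `M j = ξ i j • ((G i j)⁻¹ * M i * G i j)`. -/
structure AdmissibleCocycle {K : Type*} [Field K] {ι : Type*} (D : AdmissibleData K ι) where
  G : ι → ι → Matrix (Fin 2) (Fin 2) K
  M : ι → Matrix (Fin 2) (Fin 2) K
  G_unit : ∀ i j, IsUnit (G i j)
  G_diag : ∀ i, G i i = 1
  G_mul : ∀ i j k, G i j * G j k = G i k
  M_trace : ∀ i, (M i).trace = 0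
  M_sq : ∀ i, M i * M i = D.F i • (1 : Matrix (Fin 2) (Fin 2) K)
  M_transf : ∀ i j, M j = D.ξ i j • ((G i j)⁻¹ * M i * G i j)

/-- A cocycle is good if every `(2,1)` entry of `M i` is nonzero. -/
def AdmissibleCocycle.Good {K : Type*} [Field K] {ι : Type*} {D : AdmissibleData K ι}
    (C : AdmissibleCocycle D) : Prop := ∀ i, C.M i 1 0 ≠ 0

section Stmt4Aux
variable {K : Type*} [Field K] {ι : Type*} {D : AdmissibleData K ι}

lemma stmt4_transf_mul (C : AdmissibleCocycle D) (i j : ι) :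
    C.G i j * C.M j = D.ξ i j • (C.M i * C.G i j) := by
  have hu : IsUnit (C.G i j).det := (Matrix.isUnit_iff_isUnit_det _).mp (C.G_unit i j)
  rw [C.M_transf i j, Matrix.mul_smul, ← Matrix.mul_assoc, ← Matrix.mul_assoc,
    Matrix.mul_nonsing_inv _ hu, Matrix.one_mul]

lemma stmt4_poly_mul (A : Matrix (Fin 2) (Fin 2) K) {F : K}
    (hA : A * A = F • (1 : Matrix (Fin 2) (Fin 2) K)) (x y x' y' : K) :
    (x • (1 : Matrix (Fin 2) (Fin 2) K) + y • A) * (x' • (1 : Matrix (Fin 2) (Fin 2) K) + y' • A)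
      = (x * x' + y * y' * F) • (1 : Matrix (Fin 2) (Fin 2) K) + (x * y' + x' * y) • A := by
  rw [add_mul, mul_add, mul_add]
  simp only [Matrix.smul_mul, Matrix.mul_smul, Matrix.one_mul, Matrix.mul_one, hA, smul_smul]
  module

lemma stmt4_poly_comm (A : Matrix (Fin 2) (Fin 2) K) (x y : K) :
    (x • (1 : Matrix (Fin 2) (Fin 2) K) + y • A) * A
      = A * (x • (1 : Matrix (Fin 2) (Fin 2) K) + y • A) := by
  rw [add_mul, mul_add]
  simp [Matrix.smul_mul, Matrix.mul_smul]

/-- The matrix `P i j` in the construction. -/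
def stmt4P (C₁ C₂ : AdmissibleCocycle D) (i j : ι) : Matrix (Fin 2) (Fin 2) K :=
  (C₁.M i 1 0 * C₁.G i j 0 0 - C₁.M i 0 0 * C₁.G i j 1 0) • (1 : Matrix (Fin 2) (Fin 2) K)
    + (C₁.G i j 1 0) • C₂.M i

end Stmt4Aux

/-- tensor product of two admissible cocycles.  Given good admissible
cocycles `(G, M)` and `(H, N)` over the same data, the matrices
`G~ i j := a_{i1}⁻¹ • ((a_{i1}·g_{ij,11} − a_{i0}·g_{ij,21}) • Id + g_{ij,21} • N i) * H i j`
are invertible with the stated determinant, form a normalized cocycle, and intertwine `N`,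
i.e. `(G~, N)` is again an admissible cocycle. -/
theorem stmt4 {K : Type*} [Field K] {ι : Type*} (D : AdmissibleData K ι)
    (C₁ C₂ : AdmissibleCocycle D) (h₁ : C₁.Good) (h₂ : C₂.Good)
    (Gt : ι → ι → Matrix (Fin 2) (Fin 2) K)
    (hGt : ∀ i j, Gt i j =
      (C₁.M i 1 0)⁻¹ •
        (((C₁.M i 1 0 * C₁.G i j 0 0 - C₁.M i 0 0 * C₁.G i j 1 0) •
              (1 : Matrix (Fin 2) (Fin 2) K) +
            (C₁.G i j 1 0) • C₂.M i) * C₂.G i j)) :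
    (∀ i j, IsUnit (Gt i j)) ∧
    (∀ i j, (Gt i j).det =
      C₁.M j 1 0 * (C₁.G i j).det * (C₂.G i j).det / (C₁.M i 1 0 * D.ξ i j)) ∧
    (∀ i, Gt i i = 1) ∧
    (∀ i j k, Gt i j * Gt j k = Gt i k) ∧
    (∀ i j, C₂.M j = D.ξ i j • ((Gt i j)⁻¹ * C₂.M i * Gt i j)) := by
  have hξ := D.ξ_ne
  have entry : ∀ {A B : Matrix (Fin 2) (Fin 2) K}, A = B → ∀ r s, A r s = B r s :=
    fun h r s => by rw [h]
  have hGt' : ∀ i j, Gt i j = (C₁.M i 1 0)⁻¹ • (stmt4P C₁ C₂ i j * C₂.G i j) := by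
    intro i j; rw [hGt]; rfl
  have hd1 : ∀ i, C₁.M i 1 1 = - C₁.M i 0 0 := by
    intro i
    have h := C₁.M_trace i
    rw [Matrix.trace_fin_two] at h
    linear_combination h
  have hd2 : ∀ i, C₂.M i 1 1 = - C₂.M i 0 0 := by
    intro i
    have h := C₂.M_trace i
    rw [Matrix.trace_fin_two] at h
    linear_combination h
  have hsq1 : ∀ i, C₁.M i 0 0 ^ 2 + C₁.M i 0 1 * C₁.M i 1 0 = D.F i := by
    intro i
    have h := entry (C₁.M_sq i) 0 0
    simp [Matrix.mul_apply, Fin.sum_univ_two, Matrix.one_apply, Matrix.smul_apply,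
      smul_eq_mul] at h
    linear_combination h
  have hsq2 : ∀ i, C₂.M i 0 0 ^ 2 + C₂.M i 0 1 * C₂.M i 1 0 = D.F i := by
    intro i
    have h := entry (C₂.M_sq i) 0 0
    simp [Matrix.mul_apply, Fin.sum_univ_two, Matrix.one_apply, Matrix.smul_apply,
      smul_eq_mul] at h
    linear_combination h
  have hr1 : ∀ i j, C₁.G i j 1 0 * C₁.M j 0 0 + C₁.G i j 1 1 * C₁.M j 1 0
      = D.ξ i j * (C₁.M i 1 0 * C₁.G i j 0 0 - C₁.M i 0 0 * C₁.G i j 1 0) := by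
    intro i j
    have h := entry (stmt4_transf_mul C₁ i j) 1 0
    simp [Matrix.mul_apply, Fin.sum_univ_two, Matrix.smul_apply, smul_eq_mul, hd1] at h
    linear_combination h
  have hr2 : ∀ i j, C₁.G i j 1 0 * C₁.M j 0 1 - C₁.G i j 1 1 * C₁.M j 0 0
      = D.ξ i j * (C₁.M i 1 0 * C₁.G i j 0 1 - C₁.M i 0 0 * C₁.G i j 1 1) := by
    intro i j
    have h := entry (stmt4_transf_mul C₁ i j) 1 1
    simp [Matrix.mul_apply, Fin.sum_univ_two, Matrix.smul_apply, smul_eq_mul, hd1] at h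
    linear_combination h
  have hcoc00 : ∀ i j k, C₁.G i k 0 0
      = C₁.G i j 0 0 * C₁.G j k 0 0 + C₁.G i j 0 1 * C₁.G j k 1 0 := by
    intro i j k
    have h := entry (C₁.G_mul i j k) 0 0
    simp [Matrix.mul_apply, Fin.sum_univ_two] at h
    linear_combination -h
  have hcoc10 : ∀ i j k, C₁.G i k 1 0
      = C₁.G i j 1 0 * C₁.G j k 0 0 + C₁.G i j 1 1 * C₁.G j k 1 0 := by
    intro i j k
    have h := entry (C₁.G_mul i j k) 1 0
    simp [Matrix.mul_apply, Fin.sum_univ_two] at h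
    linear_combination -h
  -- scalar identity (2)
  have id2 : ∀ i j k,
      (C₁.M i 1 0 * C₁.G i j 0 0 - C₁.M i 0 0 * C₁.G i j 1 0) * (D.ξ i j * C₁.G j k 1 0)
        + (C₁.M j 1 0 * C₁.G j k 0 0 - C₁.M j 0 0 * C₁.G j k 1 0) * C₁.G i j 1 0
      = C₁.M j 1 0 * C₁.G i k 1 0 := by
    intro i j k
    linear_combination (-(C₁.G j k 1 0)) * hr1 i j - C₁.M j 1 0 * hcoc10 i j k
  -- scalar identity (1), scaled by ξ i j
  have id1 : ∀ i j k,
      (C₁.M i 1 0 * C₁.G i j 0 0 - C₁.M i 0 0 * C₁.G i j 1 0)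
          * (C₁.M j 1 0 * C₁.G j k 0 0 - C₁.M j 0 0 * C₁.G j k 1 0)
        + C₁.G i j 1 0 * (D.ξ i j * C₁.G j k 1 0) * D.F i
      = C₁.M j 1 0 * (C₁.M i 1 0 * C₁.G i k 0 0 - C₁.M i 0 0 * C₁.G i k 1 0) := by
    intro i j k
    apply mul_left_cancel₀ (hξ i j)
    linear_combination
      (C₁.M j 0 0 * C₁.G j k 1 0) * hr1 i j + (C₁.M j 1 0 * C₁.G j k 1 0) * hr2 i j
        - (D.ξ i j * C₁.M j 1 0 * C₁.M i 1 0) * hcoc00 i j k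
        + (D.ξ i j * C₁.M j 1 0 * C₁.M i 0 0) * hcoc10 i j k
        - (C₁.G i j 1 0 * C₁.G j k 1 0) * D.F_transf i j
        - (C₁.G i j 1 0 * C₁.G j k 1 0) * hsq1 j
  -- determinant scalar identity
  have hdet0 : ∀ i j,
      D.ξ i j * ((C₁.M i 1 0 * C₁.G i j 0 0 - C₁.M i 0 0 * C₁.G i j 1 0) ^ 2
          - C₁.G i j 1 0 ^ 2 * D.F i)
        = C₁.M j 1 0 * C₁.M i 1 0 * (C₁.G i j).det := by
    intro i j
    rw [Matrix.det_fin_two]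
    apply mul_left_cancel₀ (hξ i j)
    linear_combination
      (-(D.ξ i j * (C₁.M i 1 0 * C₁.G i j 0 0 - C₁.M i 0 0 * C₁.G i j 1 0)
          + C₁.G i j 1 0 * C₁.M j 0 0 + C₁.G i j 1 1 * C₁.M j 1 0)
        + C₁.M j 1 0 * C₁.G i j 1 1) * hr1 i j
      - (C₁.M j 1 0 * C₁.G i j 1 0) * hr2 i j
      + (C₁.G i j 1 0) ^ 2 * D.F_transf i j
      + (C₁.G i j 1 0) ^ 2 * hsq1 j
  -- determinant of P
  have hdetP : ∀ i j, (stmt4P C₁ C₂ i j).det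
      = (C₁.M i 1 0 * C₁.G i j 0 0 - C₁.M i 0 0 * C₁.G i j 1 0) ^ 2
          - C₁.G i j 1 0 ^ 2 * D.F i := by
    intro i j
    rw [Matrix.det_fin_two]
    simp only [stmt4P, Matrix.add_apply, Matrix.smul_apply, Matrix.one_apply, smul_eq_mul]
    norm_num
    linear_combination
      ((C₁.M i 1 0 * C₁.G i j 0 0 - C₁.M i 0 0 * C₁.G i j 1 0
          + C₁.G i j 1 0 * C₂.M i 0 0) * C₁.G i j 1 0) * hd2 i
        - (C₁.G i j 1 0) ^ 2 * hsq2 i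
  -- determinant of Gt
  have hdet : ∀ i j, (Gt i j).det =
      C₁.M j 1 0 * (C₁.G i j).det * (C₂.G i j).det / (C₁.M i 1 0 * D.ξ i j) := by
    intro i j
    rw [hGt' i j, Matrix.det_smul, Matrix.det_mul, hdetP i j, Fintype.card_fin]
    have h := hdet0 i j
    have hci := h₁ i
    have hxij := hξ i j
    field_simp
    linear_combination ((C₂.G i j).det) * h
  -- invertibility
  have hunit : ∀ i j, IsUnit (Gt i j) := by
    intro i j
    rw [Matrix.isUnit_iff_isUnit_det, isUnit_iff_ne_zero, hdet i j]
    have d1 : (C₁.G i j).det ≠ 0 :=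
      ((Matrix.isUnit_iff_isUnit_det _).mp (C₁.G_unit i j)).ne_zero
    have d2 : (C₂.G i j).det ≠ 0 :=
      ((Matrix.isUnit_iff_isUnit_det _).mp (C₂.G_unit i j)).ne_zero
    exact div_ne_zero (mul_ne_zero (mul_ne_zero (h₁ j) d1) d2)
      (mul_ne_zero (h₁ i) (hξ i j))
  -- normalization
  have hdiag : ∀ i, Gt i i = 1 := by
    intro i
    rw [hGt' i i]
    simp [stmt4P, C₁.G_diag, C₂.G_diag, Matrix.one_apply, smul_smul,
      inv_mul_cancel₀ (h₁ i)]
  -- the two key steps for the cocycle identity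
  have hPcomm : ∀ i j, stmt4P C₁ C₂ i j * C₂.M i = C₂.M i * stmt4P C₁ C₂ i j := by
    intro i j
    exact stmt4_poly_comm (C₂.M i) _ _
  have hstep1 : ∀ i j k, C₂.G i j * stmt4P C₁ C₂ j k
      = ((C₁.M j 1 0 * C₁.G j k 0 0 - C₁.M j 0 0 * C₁.G j k 1 0) • (1 : Matrix (Fin 2) (Fin 2) K)
          + (D.ξ i j * C₁.G j k 1 0) • C₂.M i) * C₂.G i j := by
    intro i j k
    simp only [stmt4P, mul_add, add_mul, Matrix.mul_smul, Matrix.smul_mul, Matrix.mul_one,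
      Matrix.one_mul, stmt4_transf_mul C₂ i j, smul_smul]
    module
  have hstep2 : ∀ i j k, stmt4P C₁ C₂ i j
        * ((C₁.M j 1 0 * C₁.G j k 0 0 - C₁.M j 0 0 * C₁.G j k 1 0) • (1 : Matrix (Fin 2) (Fin 2) K)
          + (D.ξ i j * C₁.G j k 1 0) • C₂.M i)
      = C₁.M j 1 0 • stmt4P C₁ C₂ i k := by
    intro i j k
    rw [stmt4P, stmt4P, stmt4_poly_mul _ (C₂.M_sq i), id1 i j k, id2 i j k,
      smul_add, smul_smul, smul_smul]
  -- cocycle identity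
  have hmul : ∀ i j k, Gt i j * Gt j k = Gt i k := by
    intro i j k
    rw [hGt' i j, hGt' j k, hGt' i k, Matrix.smul_mul, Matrix.mul_smul, smul_smul,
      Matrix.mul_assoc (stmt4P C₁ C₂ i j), ← Matrix.mul_assoc (C₂.G i j),
      hstep1 i j k, Matrix.mul_assoc _ (C₂.G i j), C₂.G_mul, ← Matrix.mul_assoc,
      hstep2 i j k, Matrix.smul_mul, smul_smul]
    congr 1
    rw [mul_assoc, inv_mul_cancel₀ (h₁ j), mul_one]
  -- intertwining
  have htransf : ∀ i j, C₂.M j = D.ξ i j • ((Gt i j)⁻¹ * C₂.M i * Gt i j) := by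
    intro i j
    have key : (stmt4P C₁ C₂ i j * C₂.G i j) * C₂.M j
        = D.ξ i j • (C₂.M i * (stmt4P C₁ C₂ i j * C₂.G i j)) := by
      rw [Matrix.mul_assoc, stmt4_transf_mul C₂ i j, Matrix.mul_smul, ← Matrix.mul_assoc,
        hPcomm i j, Matrix.mul_assoc]
    have hcomm : Gt i j * C₂.M j = D.ξ i j • (C₂.M i * Gt i j) := by
      rw [hGt' i j, Matrix.smul_mul, key, Matrix.mul_smul,
        smul_comm ((C₁.M i 1 0)⁻¹) (D.ξ i j)]
    have hud : IsUnit (Gt i j).det := (Matrix.isUnit_iff_isUnit_det _).mp (hunit i j)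
    calc C₂.M j = (Gt i j)⁻¹ * (Gt i j * C₂.M j) := by
          rw [← Matrix.mul_assoc, Matrix.nonsing_inv_mul _ hud, Matrix.one_mul]
      _ = D.ξ i j • ((Gt i j)⁻¹ * C₂.M i * Gt i j) := by
          rw [hcomm, Matrix.mul_smul, ← Matrix.mul_assoc]
  exact ⟨hunit, hdet, hdiag, hmul, htransf⟩
end

section
/- Let (G^(1), M^(1)), …, (G^(m), M^(m)) be good admissible cocycles over the same data (K, ι, ξ, F). Define M⁰ i := [[0, F i],[1, 0]] and G⁰ i j := [[1, 0],[0, ξ i j]]. For each k = 1,…,m and all i, j write a^(k)_{i0}, a^(k)_{i1} for the (1,1) and (2,1) entries of M^(k) i and g^(k)_{ij,11}, g^(k)_{ij,21} for the (1,1) and (2,1) entries of G^(k) i j, and set K^(k)+ i j := (a^(k)_{i1})⁻¹·((a^(k)_{i1}·g^(k)_{ij,11} − a^(k)_{i0}·g^(k)_{ij,21})·Id + g^(k)_{ij,21}·M⁰ i) and K^(k)− i j := (ξ i j)·(a^(k)_{i1}·det(G^(k) i j))⁻¹·((a^(k)_{i1}·g^(k)_{ij,11} − a^(k)_{i0}·g^(k)_{ij,21})·Id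 − g^(k)_{ij,21}·M⁰ i). For integers n₁, …, n_m define G^[n] i j := (K^(1)(n₁) i j)^{|n₁|} · … · (K^(m)(n_m) i j)^{|n_m|} · G⁰ i j, where K^(k)(n_k) := K^(k)+ if n_k ≥ 0 and K^(k)(n_k) := K^(k)− if n_k < 0. Then every G^[n] i j is invertible, G^[n] i i = Id, (G^[n] i j)·(G^[n] j k) = G^[n] i k for all i, j, k, and M⁰ j = (ξ i j)·(G^[n] i j)⁻¹·(M⁰ i)·(G^[n] i j) for all i, j. That is, (G^[n], M⁰) is an admissible cocycle. -/
section Stmt5Aux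
variable {K : Type*} [Field K]

private def InSpan5 (M X : Matrix (Fin 2) (Fin 2) K) : Prop :=
  ∃ α β : K, X = α • (1 : Matrix (Fin 2) (Fin 2) K) + β • M

private lemma inSpan5_one (M : Matrix (Fin 2) (Fin 2) K) : InSpan5 M 1 := ⟨1, 0, by simp⟩

private lemma inSpan5_M (M : Matrix (Fin 2) (Fin 2) K) : InSpan5 M M := ⟨0, 1, by simp⟩

private lemma inSpan5_commute {M X Y : Matrix (Fin 2) (Fin 2) K}
    (hX : InSpan5 M X) (hY : InSpan5 M Y) : X * Y = Y * X := by
  obtain ⟨a, b, rfl⟩ := hX; obtain ⟨c, d, rfl⟩ := hY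
  have h1 : Commute (1 : Matrix (Fin 2) (Fin 2) K) (c • (1:Matrix (Fin 2) (Fin 2) K) + d • M) :=
    Commute.one_left _
  have h2 : Commute M (c • (1:Matrix (Fin 2) (Fin 2) K) + d • M) :=
    ((Commute.one_right M).smul_right c).add_right ((Commute.refl M).smul_right d)
  exact ((h1.smul_left a).add_left (h2.smul_left b)).eq

private lemma span5_mul {M : Matrix (Fin 2) (Fin 2) K} {f : K} (hM : M * M = f • 1) (a b c d : K) :
    (a • (1:Matrix (Fin 2) (Fin 2) K) + b • M) * (c • (1:Matrix (Fin 2) (Fin 2) K) + d • M)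
      = (a*c + b*d*f) • (1:Matrix (Fin 2) (Fin 2) K) + (a*d + b*c) • M := by
  rw [add_mul, mul_add, mul_add, smul_mul_smul_comm, smul_mul_smul_comm, smul_mul_smul_comm,
    smul_mul_smul_comm, one_mul, mul_one, one_mul, hM, smul_smul]
  module

private lemma inSpan5_mul {M X Y : Matrix (Fin 2) (Fin 2) K} {f : K} (hM : M * M = f • 1)
    (hX : InSpan5 M X) (hY : InSpan5 M Y) : InSpan5 M (X * Y) := by
  obtain ⟨a, b, rfl⟩ := hX; obtain ⟨c, d, rfl⟩ := hY
  exact ⟨_, _, span5_mul hM a b c d⟩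

private lemma inSpan5_pow {M X : Matrix (Fin 2) (Fin 2) K} {f : K} (hM : M * M = f • 1)
    (hX : InSpan5 M X) : ∀ t : ℕ, InSpan5 M (X ^ t)
  | 0 => by simpa using inSpan5_one M
  | (t+1) => by rw [pow_succ]; exact inSpan5_mul hM (inSpan5_pow hM hX t) hX

private lemma inSpan5_listProd {M : Matrix (Fin 2) (Fin 2) K} {f : K} (hM : M * M = f • 1)
    {X : Type*} {g : X → Matrix (Fin 2) (Fin 2) K} :
    ∀ {L : List X}, (∀ x ∈ L, InSpan5 M (g x)) → InSpan5 M (L.map g).prod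
  | [], _ => by simpa using inSpan5_one M
  | (x :: L), h => by
      rw [List.map_cons, List.prod_cons]
      exact inSpan5_mul hM (h x List.mem_cons_self)
        (inSpan5_listProd hM fun y hy => h y (List.mem_cons_of_mem x hy))

private lemma M0_sq5 (F : K) :
    (!![0, F; 1, 0] : Matrix (Fin 2) (Fin 2) K) * !![0, F; 1, 0] = F • 1 := by
  ext x y; fin_cases x <;> fin_cases y <;>
    simp [Matrix.mul_apply, Fin.sum_univ_two, Matrix.one_apply]

private lemma G0_mul5 (x y : K) :
    (!![1,0;0,x] : Matrix (Fin 2) (Fin 2) K) * !![1,0;0,y] = !![1,0;0,x*y] := by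
  ext a b; fin_cases a <;> fin_cases b <;> simp [Matrix.mul_apply, Fin.sum_univ_two]

private lemma G0_one5 : (!![1,0;0,(1:K)] : Matrix (Fin 2) (Fin 2) K) = 1 := by
  ext a b; fin_cases a <;> fin_cases b <;> simp [Matrix.one_apply]

private lemma swap5 (ξ Fi Fj : K) (hF : Fj = ξ^2 * Fi) (α β : K) :
    (!![1,0;0,ξ] : Matrix (Fin 2) (Fin 2) K) * (α • 1 + β • !![0, Fj; 1, 0])
      = (α • (1:Matrix (Fin 2) (Fin 2) K) + (ξ*β) • !![0, Fi; 1, 0]) * !![1,0;0,ξ] := by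
  subst hF
  ext a b; fin_cases a <;> fin_cases b <;>
    simp [Matrix.mul_apply, Fin.sum_univ_two, Matrix.one_apply] <;> ring

private lemma E2five (h00 h10 : K) {ξ1 a0 a1 b0 b1 g00 g10 g11 : K}
    (ha1 : a1 ≠ 0) (hb1 : b1 ≠ 0)
    (hT10 : g10*b0 + g11*b1 = ξ1*(a1*g00 - a0*g10)) :
    a1⁻¹*(g10*h00+g11*h10)
      = (a1⁻¹*(a1*g00-a0*g10))*(ξ1*(b1⁻¹*h10)) + (a1⁻¹*g10)*(b1⁻¹*(b1*h00-b0*h10)) := by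
  linear_combination (norm := skip) (a1⁻¹*b1⁻¹*h10) * hT10
  field_simp
  ring

private lemma E1five (h00 h10 : K) {ξ1 Fi a0 a1 a2 b0 b1 g00 g01 g10 g11 : K}
    (ha1 : a1 ≠ 0) (hb1 : b1 ≠ 0)
    (hF : a0*a0 + a2*a1 = Fi)
    (hT00 : g00*b0 + g01*b1 = ξ1*(a0*g00 + a2*g10))
    (hT10 : g10*b0 + g11*b1 = ξ1*(a1*g00 - a0*g10)) :
    a1⁻¹*(a1*(g00*h00+g01*h10) - a0*(g10*h00+g11*h10))
      = (a1⁻¹*(a1*g00-a0*g10))*(b1⁻¹*(b1*h00-b0*h10)) + (a1⁻¹*g10)*(ξ1*(b1⁻¹*h10))*Fi := by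
  linear_combination (norm := skip) (a1⁻¹*b1⁻¹*(a1*h10))*hT00 - (a1⁻¹*b1⁻¹*(a0*h10))*hT10
    + (a1⁻¹*b1⁻¹*(ξ1*h10*g10))*hF
  field_simp
  ring

private lemma E2mfive (ξ2 h00 h10 dh : K) {ξ1 a0 a1 b0 b1 g00 g10 g11 dg : K}
    (ha1 : a1 ≠ 0) (hb1 : b1 ≠ 0) (hdg : dg ≠ 0) (hdh : dh ≠ 0)
    (hT10 : g10*b0 + g11*b1 = ξ1*(a1*g00 - a0*g10)) :
    (ξ1*ξ2*(a1*(dg*dh))⁻¹) * (-(g10*h00+g11*h10))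
      = ((ξ1*(a1*dg)⁻¹)*(a1*g00-a0*g10))*(ξ1*((ξ2*(b1*dh)⁻¹)*(-h10)))
        + ((ξ1*(a1*dg)⁻¹)*(-g10))*((ξ2*(b1*dh)⁻¹)*(b1*h00-b0*h10)) := by
  linear_combination (norm := skip) (-(ξ1*ξ2*(a1*dg*b1*dh)⁻¹*h10)) * hT10
  field_simp
  ring

private lemma E1mfive (ξ2 h00 h10 dh : K) {ξ1 Fi a0 a1 a2 b0 b1 g00 g01 g10 g11 dg : K}
    (ha1 : a1 ≠ 0) (hb1 : b1 ≠ 0) (hdg : dg ≠ 0) (hdh : dh ≠ 0)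
    (hF : a0*a0 + a2*a1 = Fi)
    (hT00 : g00*b0 + g01*b1 = ξ1*(a0*g00 + a2*g10))
    (hT10 : g10*b0 + g11*b1 = ξ1*(a1*g00 - a0*g10)) :
    (ξ1*ξ2*(a1*(dg*dh))⁻¹) * (a1*(g00*h00+g01*h10) - a0*(g10*h00+g11*h10))
      = ((ξ1*(a1*dg)⁻¹)*(a1*g00-a0*g10))*((ξ2*(b1*dh)⁻¹)*(b1*h00-b0*h10))
        + ((ξ1*(a1*dg)⁻¹)*(-g10))*(ξ1*((ξ2*(b1*dh)⁻¹)*(-h10)))*Fi := by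
  linear_combination (norm := skip) (ξ1*ξ2*(a1*dg*b1*dh)⁻¹*(a1*h10))*hT00
    - (ξ1*ξ2*(a1*dg*b1*dh)⁻¹*(a0*h10))*hT10
    + (ξ1*ξ2*(a1*dg*b1*dh)⁻¹*(ξ1*h10*g10))*hF
  field_simp
  ring

end Stmt5Aux

/-- Theorem on the group structure of `Pic` in transition-function form.
Given `m` good admissible cocycles `(G^(k), M^(k))` over the same data and integers
`n₁, …, n_m`, the matrices
`G^[n] i j := (K^(1)(n₁) i j)^{|n₁|} ⋯ (K^(m)(n_m) i j)^{|n_m|} * G⁰ i j`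
(with `K^(k)+`, `K^(k)−` as displayed, `M⁰ i = !![0, F i; 1, 0]`,
`G⁰ i j = !![1, 0; 0, ξ i j]`) are invertible, form a normalized cocycle, and intertwine
`M⁰`; i.e. `(G^[n], M⁰)` is an admissible cocycle. -/
theorem stmt5 {K : Type*} [Field K] {ι : Type*} (D : AdmissibleData K ι)
    (m : ℕ) (C : Fin m → AdmissibleCocycle D) (hC : ∀ k, (C k).Good)
    (n : Fin m → ℤ)
    (M₀ : ι → Matrix (Fin 2) (Fin 2) K) (hM₀ : ∀ i, M₀ i = !![0, D.F i; 1, 0])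
    (G₀ : ι → ι → Matrix (Fin 2) (Fin 2) K) (hG₀ : ∀ i j, G₀ i j = !![1, 0; 0, D.ξ i j])
    (Kp Km : Fin m → ι → ι → Matrix (Fin 2) (Fin 2) K)
    (hKp : ∀ k i j, Kp k i j =
      ((C k).M i 1 0)⁻¹ •
        (((C k).M i 1 0 * (C k).G i j 0 0 - (C k).M i 0 0 * (C k).G i j 1 0) •
            (1 : Matrix (Fin 2) (Fin 2) K) +
          ((C k).G i j 1 0) • M₀ i))
    (hKm : ∀ k i j, Km k i j =
      (D.ξ i j * ((C k).M i 1 0 * ((C k).G i j).det)⁻¹) •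
        (((C k).M i 1 0 * (C k).G i j 0 0 - (C k).M i 0 0 * (C k).G i j 1 0) •
            (1 : Matrix (Fin 2) (Fin 2) K) -
          ((C k).G i j 1 0) • M₀ i))
    (Gn : ι → ι → Matrix (Fin 2) (Fin 2) K)
    (hGn : ∀ i j, Gn i j =
      (((List.finRange m).map fun k =>
          (if 0 ≤ n k then Kp k i j else Km k i j) ^ (n k).natAbs)).prod * G₀ i j) :
    (∀ i j, IsUnit (Gn i j)) ∧
    (∀ i, Gn i i = 1) ∧
    (∀ i j k, Gn i j * Gn j k = Gn i k) ∧
    (∀ i j, M₀ j = D.ξ i j • ((Gn i j)⁻¹ * M₀ i * Gn i j)) := by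
    -- basic facts
  have hM₀sq : ∀ i, M₀ i * M₀ i = D.F i • 1 := fun i => by rw [hM₀ i]; exact M0_sq5 _
  have hG₀mul : ∀ i j l, G₀ i j * G₀ j l = G₀ i l := fun i j l => by
    rw [hG₀ i j, hG₀ j l, hG₀ i l, G0_mul5, D.ξ_mul]
  have hG₀diag : ∀ i, G₀ i i = 1 := fun i => by rw [hG₀ i i, D.ξ_diag]; exact G0_one5
  have hswap : ∀ i j (α β : K),
      G₀ i j * (α • 1 + β • M₀ j) = (α • 1 + (D.ξ i j * β) • M₀ i) * G₀ i j := by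
    intro i j α β
    rw [hG₀ i j, hM₀ j, hM₀ i]
    exact swap5 (D.ξ i j) (D.F i) (D.F j) (D.F_transf i j) α β
  -- scalar data of the cocycles
  have htr : ∀ (k : Fin m) i, (C k).M i 1 1 = -((C k).M i 0 0) := by
    intro k i
    have h := (C k).M_trace i
    rw [Matrix.trace_fin_two] at h
    linear_combination h
  have hFi : ∀ (k : Fin m) i,
      (C k).M i 0 0 * (C k).M i 0 0 + (C k).M i 0 1 * (C k).M i 1 0 = D.F i := by
    intro k i
    have h := congrArg (fun X : Matrix (Fin 2) (Fin 2) K => X 0 0) ((C k).M_sq i)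
    simpa [Matrix.mul_apply, Fin.sum_univ_two, Matrix.one_apply] using h
  have hdet : ∀ (k : Fin m) i j, ((C k).G i j).det ≠ 0 := fun k i j => by
    have := (Matrix.isUnit_iff_isUnit_det _).mp ((C k).G_unit i j)
    exact IsUnit.ne_zero this
  have hGM : ∀ (k : Fin m) i j,
      (C k).G i j * (C k).M j = D.ξ i j • ((C k).M i * (C k).G i j) := by
    intro k i j
    rw [(C k).M_transf i j, mul_smul_comm, ← mul_assoc, ← mul_assoc,
      Matrix.mul_nonsing_inv _ ((Matrix.isUnit_iff_isUnit_det _).mp ((C k).G_unit i j)),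
      one_mul]
  have hT00 : ∀ (k : Fin m) i j,
      (C k).G i j 0 0 * (C k).M j 0 0 + (C k).G i j 0 1 * (C k).M j 1 0
        = D.ξ i j * ((C k).M i 0 0 * (C k).G i j 0 0 + (C k).M i 0 1 * (C k).G i j 1 0) := by
    intro k i j
    have h := congrArg (fun X : Matrix (Fin 2) (Fin 2) K => X 0 0) (hGM k i j)
    simpa [Matrix.mul_apply, Fin.sum_univ_two] using h
  have hT10 : ∀ (k : Fin m) i j,
      (C k).G i j 1 0 * (C k).M j 0 0 + (C k).G i j 1 1 * (C k).M j 1 0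
        = D.ξ i j * ((C k).M i 1 0 * (C k).G i j 0 0 - (C k).M i 0 0 * (C k).G i j 1 0) := by
    intro k i j
    have h := congrArg (fun X : Matrix (Fin 2) (Fin 2) K => X 1 0) (hGM k i j)
    simp [Matrix.mul_apply, Fin.sum_univ_two] at h
    rw [htr k i] at h
    linear_combination h
  -- span normal forms
  have hKpform : ∀ k i j, Kp k i j =
      (((C k).M i 1 0)⁻¹ * ((C k).M i 1 0 * (C k).G i j 0 0 - (C k).M i 0 0 * (C k).G i j 1 0)) • 1
        + (((C k).M i 1 0)⁻¹ * ((C k).G i j 1 0)) • M₀ i := by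
    intro k i j
    rw [hKp k i j, smul_add, smul_smul, smul_smul]
  have hKmform : ∀ k i j, Km k i j =
      ((D.ξ i j * ((C k).M i 1 0 * ((C k).G i j).det)⁻¹)
          * ((C k).M i 1 0 * (C k).G i j 0 0 - (C k).M i 0 0 * (C k).G i j 1 0)) • 1
        + ((D.ξ i j * ((C k).M i 1 0 * ((C k).G i j).det)⁻¹) * (-((C k).G i j 1 0))) • M₀ i := by
    intro k i j
    rw [hKm k i j, smul_sub, smul_smul, smul_smul, sub_eq_add_neg, ← neg_smul, ← mul_neg]
  -- the combined transition factors
  set KK : Fin m → ι → ι → Matrix (Fin 2) (Fin 2) K :=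
    fun k i j => if 0 ≤ n k then Kp k i j else Km k i j with hKKdef
  have hKK : ∀ k i j, KK k i j = if 0 ≤ n k then Kp k i j else Km k i j := fun _ _ _ => rfl
  have hGn2 : ∀ i j, Gn i j =
      (((List.finRange m).map fun k => (KK k i j) ^ (n k).natAbs)).prod * G₀ i j :=
    fun i j => hGn i j
  have hspan : ∀ k i j, InSpan5 (M₀ i) (KK k i j) := by
    intro k i j
    rw [hKK]
    split_ifs with h0
    · exact ⟨_, _, hKpform k i j⟩
    · exact ⟨_, _, hKmform k i j⟩
  -- entry expansions of composite transition matrices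
  have e00 : ∀ (k : Fin m) i j l, (C k).G i l 0 0
      = (C k).G i j 0 0 * (C k).G j l 0 0 + (C k).G i j 0 1 * (C k).G j l 1 0 := by
    intro k i j l
    rw [← (C k).G_mul i j l]
    simp [Matrix.mul_apply, Fin.sum_univ_two]
  have e10 : ∀ (k : Fin m) i j l, (C k).G i l 1 0
      = (C k).G i j 1 0 * (C k).G j l 0 0 + (C k).G i j 1 1 * (C k).G j l 1 0 := by
    intro k i j l
    rw [← (C k).G_mul i j l]
    simp [Matrix.mul_apply, Fin.sum_univ_two]
  -- the basic cocycle identity for a single factor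
  have hbase : ∀ (k : Fin m) i j l, KK k i j * G₀ i j * KK k j l = KK k i l * G₀ i j := by
    intro k i j l
    rw [hKK k i j, hKK k j l, hKK k i l]
    split_ifs with h0
    · rw [hKpform k i j, hKpform k j l, hKpform k i l, mul_assoc, hswap, ← mul_assoc,
        span5_mul (hM₀sq i), e00 k i j l, e10 k i j l,
        E1five ((C k).G j l 0 0) ((C k).G j l 1 0) (hC k i) (hC k j) (hFi k i)
          (hT00 k i j) (hT10 k i j),
        E2five ((C k).G j l 0 0) ((C k).G j l 1 0) (hC k i) (hC k j) (hT10 k i j)]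
    · rw [hKmform k i j, hKmform k j l, hKmform k i l, mul_assoc, hswap, ← mul_assoc,
        span5_mul (hM₀sq i), e00 k i j l, e10 k i j l, ← D.ξ_mul i j l,
        show ((C k).G i l).det = ((C k).G i j).det * ((C k).G j l).det by
          rw [← (C k).G_mul i j l, Matrix.det_mul],
        E1mfive (D.ξ j l) ((C k).G j l 0 0) ((C k).G j l 1 0) (((C k).G j l).det)
          (hC k i) (hC k j) (hdet k i j) (hdet k j l) (hFi k i) (hT00 k i j) (hT10 k i j),
        E2mfive (D.ξ j l) ((C k).G j l 0 0) ((C k).G j l 1 0) (((C k).G j l).det)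
          (hC k i) (hC k j) (hdet k i j) (hdet k j l) (hT10 k i j)]
  -- diagonal triviality of factors
  have hdiag1 : ∀ (k : Fin m) i, KK k i i = 1 := by
    intro k i
    rw [hKK]
    split_ifs with h0
    · rw [hKp k i i, (C k).G_diag i]
      simp [Matrix.one_apply]
      rw [smul_smul, inv_mul_cancel₀ (hC k i), one_smul]
    · rw [hKm k i i, (C k).G_diag i, D.ξ_diag i]
      simp [Matrix.one_apply, Matrix.det_one]
      rw [smul_smul, inv_mul_cancel₀ (hC k i), one_smul]
  -- power version of the basic identity
  have hpow : ∀ (k : Fin m) i j l (t : ℕ),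
      (KK k i j) ^ t * G₀ i j * (KK k j l) ^ t = (KK k i l) ^ t * G₀ i j := by
    intro k i j l t
    induction t with
    | zero => simp
    | succ t ih =>
      have ecomm : KK k i j * (KK k i l) ^ t = (KK k i l) ^ t * KK k i j :=
        inSpan5_commute (hspan k i j) (inSpan5_pow (hM₀sq i) (hspan k i l) t)
      calc (KK k i j) ^ (t+1) * G₀ i j * (KK k j l) ^ (t+1)
          = KK k i j * ((KK k i j) ^ t * G₀ i j * (KK k j l) ^ t) * KK k j l := by
            rw [pow_succ' (KK k i j), pow_succ (KK k j l)]; simp only [mul_assoc]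
        _ = KK k i j * ((KK k i l) ^ t * G₀ i j) * KK k j l := by rw [ih]
        _ = KK k i j * (KK k i l) ^ t * G₀ i j * KK k j l := by simp only [mul_assoc]
        _ = (KK k i l) ^ t * KK k i j * G₀ i j * KK k j l := by rw [ecomm]
        _ = (KK k i l) ^ t * (KK k i j * G₀ i j * KK k j l) := by simp only [mul_assoc]
        _ = (KK k i l) ^ t * (KK k i l * G₀ i j) := by rw [hbase k i j l]
        _ = (KK k i l) ^ (t+1) * G₀ i j := by rw [pow_succ]; simp only [mul_assoc]
  -- list version
  have hlist : ∀ i j l (L : List (Fin m)),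
      (L.map fun k => (KK k i j) ^ (n k).natAbs).prod * G₀ i j
          * (L.map fun k => (KK k j l) ^ (n k).natAbs).prod
        = (L.map fun k => (KK k i l) ^ (n k).natAbs).prod * G₀ i j := by
    intro i j l L
    induction L with
    | nil => simp
    | cons k' L ih =>
      simp only [List.map_cons, List.prod_cons]
      set p := (KK k' i j) ^ (n k').natAbs with hp
      set q := (KK k' j l) ^ (n k').natAbs with hq
      set r := (KK k' i l) ^ (n k').natAbs with hr
      set P := (L.map fun k => (KK k i j) ^ (n k).natAbs).prod with hP
      set Q := (L.map fun k => (KK k j l) ^ (n k).natAbs).prod with hQ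
      set R := (L.map fun k => (KK k i l) ^ (n k).natAbs).prod with hR
      have hqQ : q * Q = Q * q :=
        inSpan5_commute (inSpan5_pow (hM₀sq j) (hspan k' j l) _)
          (inSpan5_listProd (hM₀sq j) fun x _ => inSpan5_pow (hM₀sq j) (hspan x j l) _)
      have hpR : p * R = R * p :=
        inSpan5_commute (inSpan5_pow (hM₀sq i) (hspan k' i j) _)
          (inSpan5_listProd (hM₀sq i) fun x _ => inSpan5_pow (hM₀sq i) (hspan x i l) _)
      have hRr : R * r = r * R :=
        inSpan5_commute
          (inSpan5_listProd (hM₀sq i) fun x _ => inSpan5_pow (hM₀sq i) (hspan x i l) _)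
          (inSpan5_pow (hM₀sq i) (hspan k' i l) _)
      calc p * P * G₀ i j * (q * Q)
          = p * P * G₀ i j * (Q * q) := by rw [hqQ]
        _ = p * (P * G₀ i j * Q) * q := by simp only [mul_assoc]
        _ = p * (R * G₀ i j) * q := by rw [ih]
        _ = p * R * G₀ i j * q := by simp only [mul_assoc]
        _ = R * p * G₀ i j * q := by rw [hpR]
        _ = R * (p * G₀ i j * q) := by simp only [mul_assoc]
        _ = R * (r * G₀ i j) := by rw [hpow k' i j l]
        _ = R * r * G₀ i j := by simp only [mul_assoc]
        _ = r * R * G₀ i j := by rw [hRr]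
  -- cocycle property of Gn
  have hcoc : ∀ i j l, Gn i j * Gn j l = Gn i l := by
    intro i j l
    rw [hGn2 i j, hGn2 j l, hGn2 i l, ← hG₀mul i j l]
    calc (((List.finRange m).map fun k => (KK k i j) ^ (n k).natAbs).prod * G₀ i j)
          * (((List.finRange m).map fun k => (KK k j l) ^ (n k).natAbs).prod * G₀ j l)
        = (((List.finRange m).map fun k => (KK k i j) ^ (n k).natAbs).prod * G₀ i j
            * ((List.finRange m).map fun k => (KK k j l) ^ (n k).natAbs).prod) * G₀ j l := by
          simp only [mul_assoc]
      _ = (((List.finRange m).map fun k => (KK k i l) ^ (n k).natAbs).prod * G₀ i j) * G₀ j l := by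
          rw [hlist i j l]
      _ = ((List.finRange m).map fun k => (KK k i l) ^ (n k).natAbs).prod * (G₀ i j * G₀ j l) := by
          simp only [mul_assoc]
  -- diagonal
  have hdiag : ∀ i, Gn i i = 1 := by
    intro i
    rw [hGn2 i i, hG₀diag i, mul_one]
    apply List.prod_eq_one
    intro x hx
    simp only [List.mem_map] at hx
    obtain ⟨k, _, rfl⟩ := hx
    rw [hdiag1 k i, one_pow]
  -- units
  have hmulinv : ∀ i j, Gn i j * Gn j i = 1 := fun i j => by rw [hcoc i j i, hdiag i]
  have hunit : ∀ i j, IsUnit (Gn i j) := fun i j =>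
    ⟨⟨Gn i j, Gn j i, hmulinv i j, hmulinv j i⟩, rfl⟩
  refine ⟨hunit, hdiag, hcoc, ?_⟩
  -- transformation of M₀
  intro i j
  have hPspan : InSpan5 (M₀ i) (((List.finRange m).map fun k => (KK k i j) ^ (n k).natAbs)).prod :=
    inSpan5_listProd (hM₀sq i) fun x _ => inSpan5_pow (hM₀sq i) (hspan x i j) _
  have hG₀M : G₀ i j * M₀ j = (D.ξ i j • M₀ i) * G₀ i j := by
    have h := hswap i j 0 1
    simpa using h
  have hmain : Gn i j * M₀ j = D.ξ i j • (M₀ i * Gn i j) := by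
    obtain ⟨α, β, hαβ⟩ := hPspan
    have hcommP : (((List.finRange m).map fun k => (KK k i j) ^ (n k).natAbs)).prod * M₀ i
        = M₀ i * (((List.finRange m).map fun k => (KK k i j) ^ (n k).natAbs)).prod :=
      inSpan5_commute ⟨α, β, hαβ⟩ (inSpan5_M (M₀ i))
    calc Gn i j * M₀ j
        = (((List.finRange m).map fun k => (KK k i j) ^ (n k).natAbs)).prod
            * (G₀ i j * M₀ j) := by rw [hGn2 i j]; simp only [mul_assoc]
      _ = (((List.finRange m).map fun k => (KK k i j) ^ (n k).natAbs)).prod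
            * ((D.ξ i j • M₀ i) * G₀ i j) := by rw [hG₀M]
      _ = D.ξ i j • ((((List.finRange m).map fun k => (KK k i j) ^ (n k).natAbs)).prod
            * M₀ i * G₀ i j) := by
          rw [smul_mul_assoc, mul_smul_comm]; simp only [mul_assoc]
      _ = D.ξ i j • (M₀ i * ((((List.finRange m).map fun k =>
            (KK k i j) ^ (n k).natAbs)).prod * G₀ i j)) := by
          rw [hcommP]; simp only [mul_assoc]
      _ = D.ξ i j • (M₀ i * Gn i j) := by rw [← hGn2 i j]
  have hdet' : IsUnit (Gn i j).det := (Matrix.isUnit_iff_isUnit_det _).mp (hunit i j)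
  calc M₀ j = 1 * M₀ j := (one_mul _).symm
    _ = (Gn i j)⁻¹ * Gn i j * M₀ j := by rw [Matrix.nonsing_inv_mul _ hdet']
    _ = (Gn i j)⁻¹ * (Gn i j * M₀ j) := by rw [mul_assoc]
    _ = (Gn i j)⁻¹ * (D.ξ i j • (M₀ i * Gn i j)) := by rw [hmain]
    _ = D.ξ i j • ((Gn i j)⁻¹ * M₀ i * Gn i j) := by
        rw [mul_smul_comm]; simp only [mul_assoc]
end

section
/- Let K be a field, ξ a nonzero element of K, F ∈ K and F′ := ξ²·F. Let G be an invertible 2×2 matrix over K, let a₀, a₁, a₂ ∈ K with a₀² + a₁·a₂ = F and a₁ ≠ 0, set M := [[a₀, a₂],[a₁, −a₀]] and M′ := ξ·G⁻¹·M·G, and write b₀, b₂, b₁ for the (1,1), (1,2) and (2,1) entries of M′ (so M′ = [[b₀, b₂],[b₁, −b₀]]); assume b₁ ≠ 0. Given x, y ∈ K, define x′, y′ ∈ K by the equation (x′ + b₀·y′, b₁·y′)ᵗ = G⁻¹·(x + a₀·y, a₁·y)ᵗ (i.e. y′ is b₁⁻¹ times the second component of G⁻¹·(x + a₀·y, a₁·y)ᵗ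 and x′ is the first component minus b₀·y′). Then (det G / ξ)·b₁·(x′² − y′²·F′) = a₁·(x² − y²·F). -/
set_option maxHeartbeats 1000000

private lemma stmt6_aux {K : Type*} [Field K] (ξ d P Q U0 U1 c : K)
    (hξ : ξ ≠ 0) (hd : d ≠ 0) (hP : P ≠ 0) :
    d / ξ * (ξ * (d⁻¹ * P)) *
      ((d⁻¹ * U0 - ξ * (d⁻¹ * Q) * ((ξ * (d⁻¹ * P))⁻¹ * (d⁻¹ * U1))) ^ 2 -
        ((ξ * (d⁻¹ * P))⁻¹ * (d⁻¹ * U1)) ^ 2 * (ξ ^ 2 * c)) =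
      (d ^ 2 * P)⁻¹ * ((P * U0 - Q * U1) ^ 2 - d ^ 2 * U1 ^ 2 * c) := by
  simp only [mul_inv, inv_inv]
  field_simp

/-- gluing identity for global sections.  Over a field `K`, with `ξ ≠ 0`,
`F′ := ξ²·F`, `G` invertible, `M := !![a₀, a₂; a₁, -a₀]` with `a₀² + a₁a₂ = F` and `a₁ ≠ 0`,
`M′ := ξ • (G⁻¹ * M * G)` with entries `b₀ = M′₁₁`, `b₂ = M′₁₂`, `b₁ = M′₂₁ ≠ 0`, and
`x′, y′` defined by `(x′ + b₀·y′, b₁·y′)ᵗ = G⁻¹·(x + a₀·y, a₁·y)ᵗ`, one has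
`(det G / ξ)·b₁·(x′² − y′²·F′) = a₁·(x² − y²·F)`. -/
theorem stmt6 {K : Type*} [Field K] (ξ F : K) (hξ : ξ ≠ 0)
    (G : Matrix (Fin 2) (Fin 2) K) (hG : IsUnit G.det)
    (a₀ a₁ a₂ : K) (hF : a₀ ^ 2 + a₁ * a₂ = F) (ha₁ : a₁ ≠ 0)
    (M M' : Matrix (Fin 2) (Fin 2) K)
    (hM : M = !![a₀, a₂; a₁, -a₀]) (hM' : M' = ξ • (G⁻¹ * M * G))
    (hb₁ : M' 1 0 ≠ 0)
    (x y x' y' : K)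
    (hy' : y' = (M' 1 0)⁻¹ * (G⁻¹.mulVec ![x + a₀ * y, a₁ * y] 1))
    (hx' : x' = G⁻¹.mulVec ![x + a₀ * y, a₁ * y] 0 - M' 0 0 * y') :
    (G.det / ξ) * M' 1 0 * (x' ^ 2 - y' ^ 2 * (ξ ^ 2 * F)) = a₁ * (x ^ 2 - y ^ 2 * F) := by
  have hd : G.det ≠ 0 := hG.ne_zero
  have hGi : G⁻¹ = (G.det)⁻¹ • !![G 1 1, -(G 0 1); -(G 1 0), G 0 0] := by
    rw [Matrix.inv_def, Matrix.adjugate_fin_two, Ring.inverse_eq_inv]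
  set p := G 0 0 with hp; set q := G 0 1 with hq; set r := G 1 0 with hr; set s := G 1 1 with hs
  set d := G.det with hdd
  have hdet : d = p * s - q * r := Matrix.det_fin_two G
  have hu0 : G⁻¹.mulVec ![x + a₀ * y, a₁ * y] 0 = d⁻¹ * (s * (x + a₀ * y) - q * (a₁ * y)) := by
    rw [hGi]; simp [Matrix.mulVec, dotProduct, Fin.sum_univ_two]; ring
  have hu1 : G⁻¹.mulVec ![x + a₀ * y, a₁ * y] 1 = d⁻¹ * (-r * (x + a₀ * y) + p * (a₁ * y)) := by
    rw [hGi]; simp [Matrix.mulVec, dotProduct, Fin.sum_univ_two]; ring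
  have hb0 : M' 0 0 = ξ * (d⁻¹ * (a₀ * (p * s + q * r) + a₂ * r * s - a₁ * p * q)) := by
    rw [hM', hGi, hM]
    simp [Matrix.mul_apply, Matrix.vecMul, dotProduct, Fin.sum_univ_two]
    ring_nf
    tauto
  have hb1 : M' 1 0 = ξ * (d⁻¹ * (a₁ * p ^ 2 - 2 * a₀ * p * r - a₂ * r ^ 2)) := by
    rw [hM', hGi, hM]
    simp [Matrix.mul_apply, Matrix.vecMul, dotProduct, Fin.sum_univ_two]
    ring_nf
    left; rw [← hp, ← hr]; ring
  have hP : a₁ * p ^ 2 - 2 * a₀ * p * r - a₂ * r ^ 2 ≠ 0 := by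
    intro h; apply hb₁; rw [hb1, h, mul_zero, mul_zero]
  rw [hb1] at hy' ⊢
  rw [hb0] at hx'
  rw [hu0] at hx'
  rw [hu1] at hy'
  subst hx' hy'
  rw [stmt6_aux ξ d (a₁ * p ^ 2 - 2 * a₀ * p * r - a₂ * r ^ 2)
    (a₀ * (p * s + q * r) + a₂ * r * s - a₁ * p * q)
    (s * (x + a₀ * y) - q * (a₁ * y)) (-r * (x + a₀ * y) + p * (a₁ * y)) F hξ hd hP]
  have hpoly : ((a₁ * p ^ 2 - 2 * a₀ * p * r - a₂ * r ^ 2) * (s * (x + a₀ * y) - q * (a₁ * y)) -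
      (a₀ * (p * s + q * r) + a₂ * r * s - a₁ * p * q) * (-r * (x + a₀ * y) + p * (a₁ * y))) ^ 2 -
      d ^ 2 * (-r * (x + a₀ * y) + p * (a₁ * y)) ^ 2 * F =
      d ^ 2 * (a₁ * p ^ 2 - 2 * a₀ * p * r - a₂ * r ^ 2) * (a₁ * (x ^ 2 - y ^ 2 * F)) := by
    rw [hdet, ← hF]; ring
  rw [hpoly, ← mul_assoc, inv_mul_cancel₀ (mul_ne_zero (pow_ne_zero 2 hd) hP), one_mul]
end

section
/- Let K := ℂ(x) be the field of rational functions over ℂ in the variable x, let ℂ[x] ⊂ K be the subring of polynomials, ℂ[x⁻¹] ⊂ K the subring of polynomials in x⁻¹, and ℂ[x, x⁻¹] ⊂ K the subring of Laurent polynomials. Let G be an invertible 2×2 matrix over K such that all entries of G and of G⁻¹ lie in ℂ[x, x⁻¹]. Then there exist 2×2 matrices A, B over K and integers e₁, e₂ such that all entries of A lie in ℂ[x] and det A is a nonzero constant, all entries of B lie in ℂ[x⁻¹] and det B is a nonzero constant, and A⁻¹·G·B = [[x^{e₁}, 0],[0, x^{e₂}]]. -/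
/-- `f ∈ ℂ[x] ⊂ ℂ(x)`: `f` is a polynomial in `x`. -/
def MemPolyX (f : RatFunc ℂ) : Prop :=
  ∃ p : Polynomial ℂ, f = algebraMap (Polynomial ℂ) (RatFunc ℂ) p

/-- `f ∈ ℂ[x⁻¹] ⊂ ℂ(x)`: `f` is a polynomial in `x⁻¹`. -/
def MemPolyXInv (f : RatFunc ℂ) : Prop :=
  ∃ p : Polynomial ℂ, f = Polynomial.aeval (RatFunc.X : RatFunc ℂ)⁻¹ p

/-- `f ∈ ℂ[x, x⁻¹] ⊂ ℂ(x)`: `f` is a Laurent polynomial in `x`. -/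
def MemLaurent (f : RatFunc ℂ) : Prop :=
  ∃ (p : Polynomial ℂ) (n : ℕ),
    f = (RatFunc.X : RatFunc ℂ)⁻¹ ^ n * algebraMap (Polynomial ℂ) (RatFunc ℂ) p

noncomputable section
set_option maxHeartbeats 1000000
set_option synthInstance.maxHeartbeats 200000

local notation "𝕂" => RatFunc ℂ
local notation "𝕏" => (RatFunc.X : RatFunc ℂ)

def φ (p : Polynomial ℂ) : RatFunc ℂ := algebraMap (Polynomial ℂ) (RatFunc ℂ) p

def ψ (p : Polynomial ℂ) : RatFunc ℂ := Polynomial.aeval (RatFunc.X : RatFunc ℂ)⁻¹ p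

lemma memLaurent_def {f : 𝕂} : MemLaurent f ↔ ∃ (p : Polynomial ℂ) (n : ℕ), f = (𝕏⁻¹) ^ n * φ p :=
  Iff.rfl
lemma memPolyX_def {f : 𝕂} : MemPolyX f ↔ ∃ p, f = φ p := Iff.rfl
lemma memPolyXInv_def {f : 𝕂} : MemPolyXInv f ↔ ∃ p, f = ψ p := Iff.rfl

@[simp] lemma φ_add (p q : Polynomial ℂ) : φ (p + q) = φ p + φ q := map_add _ _ _
@[simp] lemma φ_mul (p q : Polynomial ℂ) : φ (p * q) = φ p * φ q := map_mul _ _ _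
@[simp] lemma φ_neg (p : Polynomial ℂ) : φ (-p) = -φ p := map_neg _ _
@[simp] lemma φ_zero : φ 0 = 0 := map_zero _
@[simp] lemma φ_one : φ 1 = 1 := map_one _
@[simp] lemma φ_pow (p : Polynomial ℂ) (n : ℕ) : φ (p ^ n) = φ p ^ n := map_pow _ _ _
@[simp] lemma ψ_add (p q : Polynomial ℂ) : ψ (p + q) = ψ p + ψ q := map_add _ _ _
@[simp] lemma ψ_mul (p q : Polynomial ℂ) : ψ (p * q) = ψ p * ψ q := map_mul _ _ _
@[simp] lemma ψ_neg (p : Polynomial ℂ) : ψ (-p) = -ψ p := map_neg _ _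
@[simp] lemma ψ_zero : ψ 0 = 0 := map_zero _
@[simp] lemma ψ_one : ψ 1 = 1 := map_one _
@[simp] lemma ψ_pow (p : Polynomial ℂ) (n : ℕ) : ψ (p ^ n) = ψ p ^ n := map_pow _ _ _

lemma Xne : 𝕏 ≠ 0 := RatFunc.X_ne_zero

@[simp] lemma φ_X : φ Polynomial.X = 𝕏 := rfl
@[simp] lemma φ_C (c : ℂ) : φ (Polynomial.C c) = RatFunc.C c := rfl
@[simp] lemma ψ_X : ψ Polynomial.X = 𝕏⁻¹ := Polynomial.aeval_X _

lemma ψ_def (p : Polynomial ℂ) : ψ p = Polynomial.eval₂ (algebraMap ℂ (RatFunc ℂ)) 𝕏⁻¹ p :=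
  Polynomial.aeval_def _ _
@[simp] lemma ψ_C (c : ℂ) : ψ (Polynomial.C c) = RatFunc.C c := by
  rw [ψ, Polynomial.aeval_C, RatFunc.algebraMap_eq_C]

/-- `φ` is `aeval 𝕏`. -/
lemma φ_eq_aeval (p : Polynomial ℂ) : φ p = Polynomial.aeval 𝕏 p := by
  rw [φ]
  induction p using Polynomial.induction_on' with
  | add p q hp hq => rw [map_add, map_add, hp, hq]
  | monomial n a =>
      rw [← Polynomial.C_mul_X_pow_eq_monomial]
      simp [RatFunc.algebraMap_eq_C]

/-- transfer: a polynomial in `x`, reflected, becomes a polynomial in `x⁻¹`. -/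
lemma transfer (r : Polynomial ℂ) (D : ℕ) (h : r.natDegree ≤ D) :
    φ r = ψ (r.reflect D) * 𝕏 ^ D := by
  letI : Invertible 𝕏 := invertibleOfNonzero Xne
  have h2 := Polynomial.eval₂_reflect_mul_pow (algebraMap ℂ (RatFunc ℂ)) 𝕏 D r h
  rw [φ_eq_aeval, Polynomial.aeval_def, ← h2, ψ_def,
    invOf_eq_right_inv (mul_inv_cancel₀ Xne)]

lemma natDegree_reflect_le {r : Polynomial ℂ} {D : ℕ} (h : r.natDegree ≤ D) :
    (r.reflect D).natDegree ≤ D := by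
  rw [Polynomial.natDegree_le_iff_coeff_eq_zero]
  intro N hN
  rw [Polynomial.coeff_reflect]
  have : Polynomial.revAt D N = N := Polynomial.revAt_eq_self_of_lt hN
  rw [this]
  exact Polynomial.coeff_eq_zero_of_natDegree_lt (lt_of_le_of_lt h hN)

lemma reflect_reflect (r : Polynomial ℂ) (D : ℕ) : (r.reflect D).reflect D = r := by
  ext i
  rw [Polynomial.coeff_reflect, Polynomial.coeff_reflect, Polynomial.revAt_invol]

lemma transfer' (q : Polynomial ℂ) (D : ℕ) (h : q.natDegree ≤ D) :
    ψ q = φ (q.reflect D) * (𝕏⁻¹) ^ D := by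
  have h2 := transfer (q.reflect D) D (natDegree_reflect_le h)
  rw [reflect_reflect] at h2
  rw [h2, mul_assoc, inv_pow, mul_inv_cancel₀ (pow_ne_zero _ Xne), mul_one]

lemma xinvpow (n : ℕ) : (𝕏⁻¹) ^ n = 𝕏 ^ (-(n : ℤ)) := by
  rw [inv_pow, ← zpow_natCast, ← zpow_neg]

lemma zpow_split {m a : ℤ} {k : ℕ} (h : a + k = m) : 𝕏 ^ m = 𝕏 ^ a * 𝕏 ^ k := by
  rw [← h, zpow_add₀ Xne, zpow_natCast]

lemma memLaurent_iff {f : 𝕂} : MemLaurent f ↔ ∃ (t : ℤ) (p : Polynomial ℂ), f = 𝕏 ^ t * φ p := by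
  rw [memLaurent_def]
  constructor
  · rintro ⟨p, n, rfl⟩
    exact ⟨-(n : ℤ), p, by rw [xinvpow]⟩
  · rintro ⟨t, p, rfl⟩
    rcases le_or_gt 0 t with ht | ht
    · refine ⟨Polynomial.X ^ t.toNat * p, 0, ?_⟩
      rw [pow_zero, one_mul, φ_mul, φ_pow, φ_X, ← zpow_natCast 𝕏 t.toNat,
        Int.toNat_of_nonneg ht]
    · refine ⟨p, (-t).toNat, ?_⟩
      rw [xinvpow]
      congr 2
      omega

lemma MemLaurent.phi (p : Polynomial ℂ) : MemLaurent (φ p) := memLaurent_def.2 ⟨p, 0, by simp⟩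

lemma MemLaurent.zpowX (t : ℤ) : MemLaurent (𝕏 ^ t) :=
  memLaurent_iff.2 ⟨t, 1, by simp⟩

lemma MemLaurent.powX (n : ℕ) : MemLaurent (𝕏 ^ n) := by
  rw [← zpow_natCast]; exact MemLaurent.zpowX _

lemma MemLaurent.powXinv (n : ℕ) : MemLaurent ((𝕏⁻¹) ^ n) := memLaurent_def.2 ⟨1, n, by simp⟩

lemma MemLaurent.c (c : ℂ) : MemLaurent (RatFunc.C c) := by
  rw [← φ_C]; exact MemLaurent.phi _

lemma MemLaurent.one : MemLaurent (1 : 𝕂) := by simpa using MemLaurent.phi 1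

lemma MemLaurent.mul {f g : 𝕂} (hf : MemLaurent f) (hg : MemLaurent g) : MemLaurent (f * g) := by
  rw [memLaurent_iff] at *
  obtain ⟨s, p, rfl⟩ := hf
  obtain ⟨t, q, rfl⟩ := hg
  exact ⟨s + t, p * q, by rw [φ_mul, zpow_add₀ Xne]; ring⟩

lemma MemLaurent.add {f g : 𝕂} (hf : MemLaurent f) (hg : MemLaurent g) : MemLaurent (f + g) := by
  rw [memLaurent_iff] at *
  obtain ⟨s, p, rfl⟩ := hf
  obtain ⟨t, q, rfl⟩ := hg
  rcases le_total s t with h | h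
  · refine ⟨s, p + Polynomial.X ^ (t - s).toNat * q, ?_⟩
    rw [φ_add, φ_mul, φ_pow, φ_X, mul_add, ← mul_assoc,
      ← zpow_split (a := s) (m := t) (by omega)]
  · refine ⟨t, Polynomial.X ^ (s - t).toNat * p + q, ?_⟩
    rw [φ_add, φ_mul, φ_pow, φ_X, mul_add, ← mul_assoc,
      ← zpow_split (a := t) (m := s) (by omega)]

lemma MemLaurent.neg {f : 𝕂} (hf : MemLaurent f) : MemLaurent (-f) := by
  rw [memLaurent_iff] at *
  obtain ⟨s, p, rfl⟩ := hf
  exact ⟨s, -p, by rw [φ_neg, mul_neg]⟩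

lemma MemLaurent.psi (q : Polynomial ℂ) : MemLaurent (ψ q) := by
  rw [transfer' q q.natDegree le_rfl]
  exact (MemLaurent.phi _).mul (MemLaurent.powXinv _)

/-- every Laurent element has a `ψ`-form. -/
lemma MemLaurent.psi_form {f : 𝕂} (hf : MemLaurent f) :
    ∃ (t : ℤ) (q : Polynomial ℂ), f = 𝕏 ^ t * ψ q := by
  rw [memLaurent_iff] at hf
  obtain ⟨s, p, rfl⟩ := hf
  refine ⟨s + p.natDegree, p.reflect p.natDegree, ?_⟩
  rw [transfer p p.natDegree le_rfl, zpow_add₀ Xne, zpow_natCast]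
  ring

lemma psi_shift {s t : ℤ} (u : Polynomial ℂ) (h : s ≤ t) :
    𝕏 ^ s * ψ u = 𝕏 ^ t * ψ (Polynomial.X ^ (t - s).toNat * u) := by
  rw [ψ_mul, ψ_pow, ψ_X, ← mul_assoc, xinvpow, ← zpow_add₀ Xne]
  congr 2
  omega

/-- common exponent `ψ`-forms for two Laurent elements. -/
lemma MemLaurent.psi_form₂ {f g : 𝕂} (hf : MemLaurent f) (hg : MemLaurent g) :
    ∃ (t : ℤ) (u v : Polynomial ℂ), f = 𝕏 ^ t * ψ u ∧ g = 𝕏 ^ t * ψ v := by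
  obtain ⟨s, u, rfl⟩ := hf.psi_form
  obtain ⟨t, v, rfl⟩ := hg.psi_form
  rcases le_total s t with h | h
  · exact ⟨t, _, v, psi_shift u h, rfl⟩
  · exact ⟨s, u, _, rfl, psi_shift v h⟩

lemma MemPolyX.laurent {f : 𝕂} (h : MemPolyX f) : MemLaurent f := by
  obtain ⟨p, rfl⟩ := h; exact MemLaurent.phi p

lemma MemPolyXInv.laurent {f : 𝕂} (h : MemPolyXInv f) : MemLaurent f := by
  obtain ⟨p, rfl⟩ := h; exact MemLaurent.psi p

/- MemPolyX closure -/
lemma MemPolyX.add {f g : 𝕂} (hf : MemPolyX f) (hg : MemPolyX g) : MemPolyX (f + g) := by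
  rw [memPolyX_def] at *
  obtain ⟨p, rfl⟩ := hf; obtain ⟨q, rfl⟩ := hg; exact ⟨p + q, (φ_add p q).symm⟩
lemma MemPolyX.mul {f g : 𝕂} (hf : MemPolyX f) (hg : MemPolyX g) : MemPolyX (f * g) := by
  rw [memPolyX_def] at *
  obtain ⟨p, rfl⟩ := hf; obtain ⟨q, rfl⟩ := hg; exact ⟨p * q, (φ_mul p q).symm⟩
lemma MemPolyX.neg {f : 𝕂} (hf : MemPolyX f) : MemPolyX (-f) := by
  rw [memPolyX_def] at *
  obtain ⟨p, rfl⟩ := hf; exact ⟨-p, (φ_neg p).symm⟩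
lemma MemPolyX.zero : MemPolyX (0 : 𝕂) := memPolyX_def.2 ⟨0, φ_zero.symm⟩
lemma MemPolyX.one : MemPolyX (1 : 𝕂) := memPolyX_def.2 ⟨1, φ_one.symm⟩
lemma MemPolyX.c (c : ℂ) : MemPolyX (RatFunc.C c) := memPolyX_def.2 ⟨Polynomial.C c, (φ_C c).symm⟩
lemma MemPolyX.powX (n : ℕ) : MemPolyX ((𝕏 : 𝕂) ^ n) :=
  memPolyX_def.2 ⟨Polynomial.X ^ n, by simp⟩

lemma MemPolyXInv.add {f g : 𝕂} (hf : MemPolyXInv f) (hg : MemPolyXInv g) :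
    MemPolyXInv (f + g) := by
  rw [memPolyXInv_def] at *
  obtain ⟨p, rfl⟩ := hf; obtain ⟨q, rfl⟩ := hg; exact ⟨p + q, (ψ_add p q).symm⟩
lemma MemPolyXInv.mul {f g : 𝕂} (hf : MemPolyXInv f) (hg : MemPolyXInv g) :
    MemPolyXInv (f * g) := by
  rw [memPolyXInv_def] at *
  obtain ⟨p, rfl⟩ := hf; obtain ⟨q, rfl⟩ := hg; exact ⟨p * q, (ψ_mul p q).symm⟩
lemma MemPolyXInv.neg {f : 𝕂} (hf : MemPolyXInv f) : MemPolyXInv (-f) := by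
  rw [memPolyXInv_def] at *
  obtain ⟨p, rfl⟩ := hf; exact ⟨-p, (ψ_neg p).symm⟩
lemma MemPolyXInv.zero : MemPolyXInv (0 : 𝕂) := memPolyXInv_def.2 ⟨0, ψ_zero.symm⟩
lemma MemPolyXInv.one : MemPolyXInv (1 : 𝕂) := memPolyXInv_def.2 ⟨1, ψ_one.symm⟩
lemma MemPolyXInv.c (c : ℂ) : MemPolyXInv (RatFunc.C c) :=
  memPolyXInv_def.2 ⟨Polynomial.C c, (ψ_C c).symm⟩
lemma MemPolyXInv.powXinv (n : ℕ) : MemPolyXInv ((𝕏⁻¹ : 𝕂) ^ n) :=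
  memPolyXInv_def.2 ⟨Polynomial.X ^ n, by simp⟩

lemma psi_shift_k {s t : ℤ} (k : ℕ) (u : Polynomial ℂ) (h : s + k = t) :
    𝕏 ^ t * ψ (Polynomial.X ^ k * u) = 𝕏 ^ s * ψ u := by
  rw [ψ_mul, ψ_pow, ψ_X, ← mul_assoc, xinvpow, ← zpow_add₀ Xne]
  congr 2
  omega

open Polynomial in
/-- divisor of a power of `X` in `ℂ[X]` is a constant times a power of `X`. -/
lemma monomial_of_mul_eq_X_pow {p q : Polynomial ℂ} {s : ℕ}
    (h : p * q = Polynomial.X ^ s) :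
    ∃ (c : ℂ) (j : ℕ), c ≠ 0 ∧ p = Polynomial.C c * Polynomial.X ^ j := by
  have hX : (Polynomial.X : Polynomial ℂ) ^ s ≠ 0 := pow_ne_zero _ Polynomial.X_ne_zero
  have hp : p ≠ 0 := fun hp => hX (by rw [← h, hp, zero_mul])
  have hq : q ≠ 0 := fun hq => hX (by rw [← h, hq, mul_zero])
  have hdeg : p.natDegree + q.natDegree = s := by
    rw [← Polynomial.natDegree_mul hp hq, h, Polynomial.natDegree_X_pow]
  have htr : p.natTrailingDegree + q.natTrailingDegree = s := by
    rw [← Polynomial.natTrailingDegree_mul hp hq, h, Polynomial.natTrailingDegree_X_pow]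
  have h1 : p.natTrailingDegree ≤ p.natDegree := Polynomial.natTrailingDegree_le_natDegree _
  have h2 : q.natTrailingDegree ≤ q.natDegree := Polynomial.natTrailingDegree_le_natDegree _
  refine ⟨p.coeff p.natDegree, p.natDegree, ?_, ?_⟩
  · rw [← Polynomial.leadingCoeff]
    exact Polynomial.leadingCoeff_ne_zero.2 hp
  · ext n
    rcases lt_trichotomy n p.natDegree with hn | hn | hn
    · rw [Polynomial.coeff_eq_zero_of_lt_natTrailingDegree (by omega)]
      simp [Polynomial.coeff_C_mul, Polynomial.coeff_X_pow, Nat.ne_of_lt hn]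
    · subst hn
      simp [Polynomial.coeff_C_mul, Polynomial.coeff_X_pow]
    · rw [Polynomial.coeff_eq_zero_of_natDegree_lt hn]
      simp [Polynomial.coeff_C_mul, Polynomial.coeff_X_pow, (Nat.ne_of_lt hn).symm]

lemma C_ne_zero' {c : ℂ} (hc : c ≠ 0) : (RatFunc.C c : 𝕂) ≠ 0 := by
  rw [← RatFunc.algebraMap_eq_C]
  exact RatFunc.algebraMap_ne_zero (by simpa using hc)

/-- units of the Laurent ring: classification. -/
lemma laurent_unit {f g : 𝕂} (hf : MemLaurent f) (hg : MemLaurent g) (h : f * g = 1) :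
    ∃ (c : ℂ) (e : ℤ), c ≠ 0 ∧ f = RatFunc.C c * 𝕏 ^ e := by
  rw [memLaurent_iff] at hf hg
  obtain ⟨s, p, rfl⟩ := hf
  obtain ⟨t, q, rfl⟩ := hg
  have hprod : φ p * φ q * 𝕏 ^ (s + t) = 1 := by
    rw [zpow_add₀ Xne, ← h]; ring
  have key : ∃ (k l : ℕ), φ (p * q * Polynomial.X ^ k) = φ (Polynomial.X ^ l) := by
    rcases le_or_gt 0 (s + t) with hst | hst
    · refine ⟨(s + t).toNat, 0, ?_⟩
      rw [φ_mul, φ_mul, φ_pow, φ_X, φ_pow, φ_X, pow_zero, ← hprod]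
      rw [← zpow_natCast 𝕏 (s+t).toNat, Int.toNat_of_nonneg hst]
    · refine ⟨0, (-(s + t)).toNat, ?_⟩
      rw [φ_mul, φ_mul, φ_pow, φ_X, φ_pow, φ_X, pow_zero, mul_one]
      have h2 : (φ p * φ q * 𝕏 ^ (s + t)) * 𝕏 ^ (-(s+t)) = 𝕏 ^ (-(s+t)) := by rw [hprod, one_mul]
      rw [mul_assoc, ← zpow_add₀ Xne, add_neg_cancel, zpow_zero, mul_one] at h2
      rw [h2, ← zpow_natCast 𝕏, Int.toNat_of_nonneg (by omega)]
  obtain ⟨k, l, hkl⟩ := key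
  have hinj := RatFunc.algebraMap_injective (K := ℂ) hkl
  have hpr : p * (q * Polynomial.X ^ k) = Polynomial.X ^ l := by rw [← mul_assoc, hinj]
  obtain ⟨c, j, hc, hp⟩ := monomial_of_mul_eq_X_pow hpr
  refine ⟨c, s + j, hc, ?_⟩
  rw [hp, φ_mul, φ_pow, φ_C, φ_X, zpow_add₀ Xne, zpow_natCast]
  ring

/-- factor f*g = c xᵉ : the classification of either factor. -/
lemma laurent_unit' {f g : 𝕂} (hf : MemLaurent f) (hg : MemLaurent g) {c : ℂ} {e : ℤ}
    (hc : c ≠ 0) (h : f * g = RatFunc.C c * 𝕏 ^ e) :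
    ∃ (c₁ : ℂ) (e₁ : ℤ), c₁ ≠ 0 ∧ f = RatFunc.C c₁ * 𝕏 ^ e₁ := by
  have hg' : MemLaurent (g * (RatFunc.C c⁻¹ * 𝕏 ^ (-e))) :=
    hg.mul ((MemLaurent.c _).mul (MemLaurent.zpowX _))
  refine laurent_unit hf hg' ?_
  have hone : RatFunc.C c * 𝕏 ^ e * (RatFunc.C c⁻¹ * 𝕏 ^ (-e)) = 1 := by
    rw [mul_mul_mul_comm, ← map_mul, mul_inv_cancel₀ hc, map_one, one_mul,
      ← zpow_add₀ Xne, add_neg_cancel, zpow_zero]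
  rw [← mul_assoc, h, hone]

/-- trailing factorization of a nonzero polynomial. -/
lemma trailing_fact_aux : ∀ (n : ℕ) (p : Polynomial ℂ), p ≠ 0 → p.natDegree ≤ n →
    ∃ (k : ℕ) (U : Polynomial ℂ), p = Polynomial.X ^ k * U ∧ U.coeff 0 ≠ 0 ∧
      p.natDegree = k + U.natDegree := by
  intro n
  induction n with
  | zero =>
      intro p hp hd
      refine ⟨0, p, by rw [pow_zero, one_mul], ?_, by omega⟩
      intro h0
      have h1 : p = Polynomial.C (p.coeff 0) := Polynomial.eq_C_of_natDegree_eq_zero (by omega)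
      rw [h0, map_zero] at h1
      exact hp h1
  | succ n ih =>
      intro p hp hd
      by_cases h0 : p.coeff 0 ≠ 0
      · exact ⟨0, p, by rw [pow_zero, one_mul], h0, by omega⟩
      push_neg at h0
      obtain ⟨p', rfl⟩ := Polynomial.X_dvd_iff.2 h0
      have hp' : p' ≠ 0 := fun h => hp (by rw [h, mul_zero])
      have hdeg : (Polynomial.X * p').natDegree = p'.natDegree + 1 := by
        rw [Polynomial.natDegree_mul Polynomial.X_ne_zero hp', Polynomial.natDegree_X]; omega
      obtain ⟨k, U, h1, h2, h3⟩ := ih p' hp' (by omega)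
      exact ⟨k + 1, U, by rw [h1, pow_succ]; ring, h2, by omega⟩

lemma trailing_fact (p : Polynomial ℂ) (hp : p ≠ 0) :
    ∃ (k : ℕ) (U : Polynomial ℂ), p = Polynomial.X ^ k * U ∧ U.coeff 0 ≠ 0 ∧
      p.natDegree = k + U.natDegree :=
  trailing_fact_aux p.natDegree p hp le_rfl

lemma natDegree_mod_lt (r : Polynomial ℂ) (E : ℕ) (hE : 1 ≤ E)
    (h0 : r %ₘ (Polynomial.X ^ E) ≠ 0) : (r %ₘ (Polynomial.X ^ E)).natDegree < E := by
  have h1 := Polynomial.degree_modByMonic_lt r (Polynomial.monic_X_pow (R := ℂ) (n := E))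
  rw [Polynomial.degree_X_pow] at h1
  exact (Polynomial.natDegree_lt_iff_degree_lt h0).2 h1

open Polynomial in
/-- The key decomposition: a Laurent `f` splits into a high part (`x^b ℂ[x]`),
a low part (`x^a ℂ[x⁻¹]`) and possibly a middle part `x^m ψ V`. -/
lemma decomp (a b : ℤ) (f : 𝕂) (hf : MemLaurent f) :
    (∃ p q : Polynomial ℂ, f = 𝕏 ^ b * φ p + 𝕏 ^ a * ψ q) ∨
    (∃ (p q V : Polynomial ℂ) (m : ℤ), a < m ∧ m < b ∧ V.coeff 0 ≠ 0 ∧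
      (V.natDegree : ℤ) < m - a ∧ f = 𝕏 ^ b * φ p + 𝕏 ^ a * ψ q + 𝕏 ^ m * ψ V) := by
  obtain ⟨s, r, rfl⟩ := memLaurent_iff.1 hf
  rcases le_or_gt b s with hs | hs
  · left
    refine ⟨Polynomial.X ^ (s - b).toNat * r, 0, ?_⟩
    rw [ψ_zero, mul_zero, add_zero, φ_mul, φ_pow, φ_X, ← mul_assoc,
      ← zpow_split (a := b) (m := s) (by omega)]
  -- s < b : split off the high part
  · have hsplit := r.modByMonic_add_div ((Polynomial.X : Polynomial ℂ) ^ ((b-1-s).toNat+1))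
    set D := (b - 1 - s).toNat with hD
    set rm := r %ₘ (Polynomial.X ^ (D+1)) with hrmdef
    set rd := r /ₘ (Polynomial.X ^ (D+1)) with hrddef
    have hf2 : 𝕏 ^ s * φ r = 𝕏 ^ b * φ rd + 𝕏 ^ s * φ rm := by
      rw [← hsplit, φ_add, φ_mul, φ_pow, φ_X, mul_add, ← mul_assoc,
        ← zpow_split (a := s) (m := b) (by omega)]
      ring
    by_cases hrm : rm = 0
    · left
      exact ⟨rd, 0, by rw [hf2, hrm, φ_zero, mul_zero, add_zero, ψ_zero, mul_zero, add_zero]⟩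
    have hdegrm : rm.natDegree ≤ D := by
      have h9 := natDegree_mod_lt r (D+1) (by omega) (by rw [← hrmdef]; exact hrm)
      rw [← hrmdef] at h9
      omega
    have hwform : 𝕏 ^ s * φ rm = 𝕏 ^ (b-1) * ψ (rm.reflect D) := by
      rw [transfer rm D hdegrm, zpow_split (a := s) (k := D) (m := b - 1) (by omega)]
      ring
    set w := rm.reflect D with hwdef
    rcases le_or_gt b (a + 1) with hba | hba
    · -- everything low
      left
      refine ⟨rd, Polynomial.X ^ (a - (b-1)).toNat * w, ?_⟩
      rw [hf2, hwform, psi_shift_k (s := b - 1) (t := a) _ w (by omega)]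
    -- b - 1 > a : split the low part off w
    · set E := (b - 1 - a).toNat with hE
      have hE1 : 1 ≤ E := by omega
      have hwsplit := w.modByMonic_add_div ((Polynomial.X : Polynomial ℂ) ^ E)
      set wm := w %ₘ (Polynomial.X ^ E) with hwmdef
      set wd := w /ₘ (Polynomial.X ^ E) with hwddef
      have hf3 : 𝕏 ^ (b-1) * ψ w = 𝕏 ^ a * ψ wd + 𝕏 ^ (b-1) * ψ wm := by
        conv_lhs => rw [← hwsplit]
        rw [ψ_add, mul_add, psi_shift_k (s := a) (t := b-1) E wd (by omega)]
        ring
      by_cases hwm : wm = 0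
      · left
        refine ⟨rd, wd, ?_⟩
        rw [hf2, hwform, hf3, hwm, ψ_zero, mul_zero, add_zero]
      have hdegwm : wm.natDegree < E := natDegree_mod_lt w E hE1 hwm
      obtain ⟨k, V, hfac, hV0, hVdeg⟩ := trailing_fact wm hwm
      right
      refine ⟨rd, wd, V, b - 1 - k, by omega, by omega, hV0, by omega, ?_⟩
      rw [hf2, hwform, hf3, hfac, psi_shift_k (s := b - 1 - k) (t := b - 1) k V (by omega)]
      ring

/-! ### Matrix infrastructure -/

local notation "M2" => Matrix (Fin 2) (Fin 2) (RatFunc ℂ)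

open Matrix

lemma entry_fin_two {α : Type*} {P : α → Prop} {a b c d : α}
    (ha : P a) (hb : P b) (hc : P c) (hd : P d) :
    ∀ i j, P (!![a, b; c, d] i j) := by
  intro i j
  fin_cases i <;> fin_cases j <;> simpa

lemma mul_entry (A B : M2) (i j : Fin 2) :
    (A * B) i j = A i 0 * B 0 j + A i 1 * B 1 j := by
  rw [Matrix.mul_apply, Fin.sum_univ_two]

def IsA (A : M2) : Prop :=
  (∀ i j, MemPolyX (A i j)) ∧ ∃ c : ℂ, c ≠ 0 ∧ A.det = RatFunc.C c

def IsB (B : M2) : Prop :=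
  (∀ i j, MemPolyXInv (B i j)) ∧ ∃ c : ℂ, c ≠ 0 ∧ B.det = RatFunc.C c

lemma IsA.mul {A A' : M2} (h : IsA A) (h' : IsA A') : IsA (A * A') := by
  obtain ⟨he, c, hc, hdet⟩ := h
  obtain ⟨he', c', hc', hdet'⟩ := h'
  refine ⟨fun i j => ?_, c * c', mul_ne_zero hc hc', ?_⟩
  · rw [mul_entry]
    exact ((he i 0).mul (he' 0 j)).add ((he i 1).mul (he' 1 j))
  · rw [Matrix.det_mul, hdet, hdet', ← _root_.map_mul]

lemma IsB.mul {A A' : M2} (h : IsB A) (h' : IsB A') : IsB (A * A') := by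
  obtain ⟨he, c, hc, hdet⟩ := h
  obtain ⟨he', c', hc', hdet'⟩ := h'
  refine ⟨fun i j => ?_, c * c', mul_ne_zero hc hc', ?_⟩
  · rw [mul_entry]
    exact ((he i 0).mul (he' 0 j)).add ((he i 1).mul (he' 1 j))
  · rw [Matrix.det_mul, hdet, hdet', ← _root_.map_mul]

lemma IsA.detUnit {A : M2} (h : IsA A) : IsUnit A.det := by
  obtain ⟨-, c, hc, hdet⟩ := h
  rw [hdet]
  exact (C_ne_zero' hc).isUnit

lemma IsB.detUnit {B : M2} (h : IsB B) : IsUnit B.det := by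
  obtain ⟨-, c, hc, hdet⟩ := h
  rw [hdet]
  exact (C_ne_zero' hc).isUnit

lemma IsA.inv {A : M2} (h : IsA A) : IsA A⁻¹ := by
  obtain ⟨he, c, hc, hdet⟩ := h
  have hinv : A⁻¹ = ((RatFunc.C c)⁻¹ • A.adjugate : M2) := by
    rw [Matrix.inv_def, hdet, Ring.inverse_eq_inv']
  have hCinv : (RatFunc.C c)⁻¹ = RatFunc.C c⁻¹ := by
    rw [← map_inv₀]
  constructor
  · intro i j
    rw [hinv, Matrix.smul_apply, smul_eq_mul, hCinv]
    have hadj : MemPolyX (A.adjugate i j) := by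
      rw [Matrix.adjugate_fin_two]
      refine entry_fin_two (he 1 1) ((he 0 1).neg) ((he 1 0).neg) (he 0 0) i j
    exact (MemPolyX.c _).mul hadj
  · refine ⟨c⁻¹, inv_ne_zero hc, ?_⟩
    rw [Matrix.det_nonsing_inv, hdet, Ring.inverse_eq_inv', hCinv]

lemma IsB.inv {B : M2} (h : IsB B) : IsB B⁻¹ := by
  obtain ⟨he, c, hc, hdet⟩ := h
  have hinv : B⁻¹ = ((RatFunc.C c)⁻¹ • B.adjugate : M2) := by
    rw [Matrix.inv_def, hdet, Ring.inverse_eq_inv']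
  have hCinv : (RatFunc.C c)⁻¹ = RatFunc.C c⁻¹ := by
    rw [← map_inv₀]
  constructor
  · intro i j
    rw [hinv, Matrix.smul_apply, smul_eq_mul, hCinv]
    have hadj : MemPolyXInv (B.adjugate i j) := by
      rw [Matrix.adjugate_fin_two]
      refine entry_fin_two (he 1 1) ((he 0 1).neg) ((he 1 0).neg) (he 0 0) i j
    exact (MemPolyXInv.c _).mul hadj
  · refine ⟨c⁻¹, inv_ne_zero hc, ?_⟩
    rw [Matrix.det_nonsing_inv, hdet, Ring.inverse_eq_inv', hCinv]

/-- the splitting predicate -/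
def SplitsM (M : M2) : Prop :=
  ∃ (A B : M2) (e₁ e₂ : ℤ), IsA A ∧ IsB B ∧ M = A * !![𝕏 ^ e₁, 0; 0, 𝕏 ^ e₂] * B

lemma SplitsM.conj {M A B : M2} (h : SplitsM M) (hA : IsA A) (hB : IsB B) :
    SplitsM (A * M * B) := by
  obtain ⟨A', B', e₁, e₂, hA', hB', rfl⟩ := h
  exact ⟨A * A', B' * B, e₁, e₂, hA.mul hA', hB'.mul hB, by
    simp only [← Matrix.mul_assoc]⟩

lemma sandwich {M A Ai Bp Bpi : M2} (hA : A * Ai = 1) (hB : Bp * Bpi = 1) :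
    M = A * (Ai * M * Bp) * Bpi := by
  simp only [← Matrix.mul_assoc, hA, Matrix.one_mul]
  rw [Matrix.mul_assoc, hB, Matrix.mul_one]

/-! ### The computational identities -/

section CalcLemmas

variable {F : Type*} [CommRing F]

lemma one_fin_two' : (1 : Matrix (Fin 2) (Fin 2) F) = !![1, 0; 0, 1] := by
  ext i j
  fin_cases i <;> fin_cases j <;> simp

lemma matrix_eq_fin_two {a b c d a' b' c' d' : F} (h1 : a = a') (h2 : b = b')
    (h3 : c = c') (h4 : d = d') : !![a, b; c, d] = !![a', b'; c', d'] := by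
  rw [h1, h2, h3, h4]

lemma A1_inv (D D' xb : F) (hD : D * D' = 1) :
    !![D, 0; xb, 1] * !![D', 0; -(D' * xb), 1] = 1 := by
  rw [Matrix.mul_fin_two, one_fin_two']
  refine matrix_eq_fin_two ?_ ?_ ?_ ?_ <;> first | ring1 | linear_combination hD

lemma Bp0_inv (D D' : F) (hD : D * D' = 1) :
    !![(0:F), -D; 1, 0] * !![0, 1; -D', 0] = 1 := by
  rw [Matrix.mul_fin_two, one_fin_two']
  refine matrix_eq_fin_two ?_ ?_ ?_ ?_ <;> first | ring1 | linear_combination hD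

lemma Bp1_inv (D D' u p q ξ : F) (N : ℕ) (hD : D * D' = 1)
    (hBez : u * p + ξ ^ N * q = 1) :
    !![-u, -(D * q); ξ ^ N, -(D * p)] * !![-p, q; -(D' * ξ ^ N), -(D' * u)] = 1 := by
  rw [Matrix.mul_fin_two, one_fin_two']
  refine matrix_eq_fin_two ?_ ?_ ?_ ?_
  · linear_combination (q * ξ ^ N) * hD + hBez
  · linear_combination (q * u) * hD
  · linear_combination (p * ξ ^ N) * hD
  · linear_combination (p * u) * hD + hBez

lemma conj_red (xa xb g P Q f : F) (hf : f = xa * Q + g + P * xb) :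
    !![1, P; 0, 1] * !![xa, g; 0, xb] * !![1, Q; 0, 1] = !![xa, f; 0, xb] := by
  rw [Matrix.mul_fin_two, Matrix.mul_fin_two]
  refine matrix_eq_fin_two ?_ ?_ ?_ ?_
  · ring
  · linear_combination -hf
  · ring
  · ring

/-- the `V = C d` (monomial middle term) balancing identity. -/
lemma calc0 (w x D D' : F) (M β : ℕ) (hD : D * D' = 1) :
    !![D', 0; -(D' * x ^ β), 1] * !![w, w * x ^ M * D; 0, w * x ^ (M + β)] *
      !![0, -D; 1, 0] = !![w * x ^ M, -w; 0, w * x ^ β] := by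
  rw [Matrix.mul_fin_two, Matrix.mul_fin_two]
  refine matrix_eq_fin_two ?_ ?_ ?_ ?_
  · linear_combination (w * x ^ M) * hD
  · linear_combination (-w) * hD
  · linear_combination (-(w * x ^ (M + β))) * hD
  · linear_combination (w * x ^ β) * hD

/-- the main balancing identity. -/
lemma calc1 (w x ξ D D' u p q : F) (j N β : ℕ)
    (hXξ : x * ξ = 1) (hD : D * D' = 1) (hBez : u * p + ξ ^ N * q = 1) :
    !![D', 0; -(D' * x ^ β), 1] *
      !![w, w * x ^ (j + N) * (D + ξ ^ j * u); 0, w * x ^ (j + N + β)] *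
      !![-u, -(D * q); ξ ^ N, -(D * p)] =
    !![w * x ^ j, -(w * x ^ (j + N) * (D + ξ ^ j * u) * p + w * q); 0, w * x ^ (N + β)] := by
  have hj : x ^ j * ξ ^ j = 1 := by rw [← mul_pow, hXξ, one_pow]
  have hN : x ^ N * ξ ^ N = 1 := by rw [← mul_pow, hXξ, one_pow]
  rw [Matrix.mul_fin_two, Matrix.mul_fin_two]
  refine matrix_eq_fin_two ?_ ?_ ?_ ?_
  · linear_combination (D' * w * D * x ^ j + D' * w * u * (x ^ j * ξ ^ j)) * hN +
      (D' * w * u) * hj + (w * x ^ j) * hD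
  · linear_combination (-(w * x ^ (j + N) * (D + ξ ^ j * u) * p + w * q)) * hD
  · linear_combination (-(D' * w * D * x ^ (j + β)) - D' * w * u * x ^ β * (x ^ j * ξ ^ j) +
      w * x ^ (j + β)) * hN + (-(D' * w * u * x ^ β)) * hj + (-(w * x ^ (j + β))) * hD
  · linear_combination (w * D * x ^ (j + N + β) * p + w * u * x ^ (N + β) * (x ^ j * ξ ^ j) * p +
      x ^ β * w * q) * hD + (w * u * x ^ (N + β) * p) * hj + (w * x ^ (N + β)) * hBez +
      (-(w * x ^ β * q)) * hN

end CalcLemmas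

/-! ### Splitting of triangular matrices -/

lemma isA_red (p : Polynomial ℂ) : IsA !![1, φ p; 0, 1] := by
  refine ⟨entry_fin_two MemPolyX.one (memPolyX_def.2 ⟨p, rfl⟩) MemPolyX.zero MemPolyX.one,
    1, one_ne_zero, ?_⟩
  rw [Matrix.det_fin_two_of, _root_.map_one]
  ring

lemma isB_red (q : Polynomial ℂ) : IsB !![1, ψ q; 0, 1] := by
  refine ⟨entry_fin_two MemPolyXInv.one (memPolyXInv_def.2 ⟨q, rfl⟩) MemPolyXInv.zero
    MemPolyXInv.one, 1, one_ne_zero, ?_⟩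
  rw [Matrix.det_fin_two_of, _root_.map_one]
  ring

lemma tri_nomid (a b : ℤ) (p q : Polynomial ℂ) :
    SplitsM !![𝕏 ^ a, 𝕏 ^ b * φ p + 𝕏 ^ a * ψ q; 0, 𝕏 ^ b] :=
  ⟨!![1, φ p; 0, 1], !![1, ψ q; 0, 1], a, b, isA_red p, isB_red q,
    (conj_red (𝕏 ^ a) (𝕏 ^ b) 0 (φ p) (ψ q) _ (by ring)).symm⟩

lemma tri_splits : ∀ (n : ℕ) (a b : ℤ) (f : 𝕂), MemLaurent f → (b - a).natAbs ≤ n →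
    SplitsM !![𝕏 ^ a, f; 0, 𝕏 ^ b] := by
  intro n
  induction n with
  | zero =>
      intro a b f hf hn
      rcases decomp a b f hf with ⟨p, q, rfl⟩ | ⟨p, q, V, m, ham, hmb, -, -, -⟩
      · exact tri_nomid a b p q
      · omega
  | succ n ih =>
      intro a b f hf hn
      rcases decomp a b f hf with ⟨p, q, rfl⟩ | ⟨p, q, V, m, ham, hmb, hV0, hVdeg, hf'⟩
      · exact tri_nomid a b p q
      have hd : V.coeff 0 ≠ 0 := hV0
      set d := V.coeff 0 with hd_def
      have hCd : RatFunc.C d * RatFunc.C d⁻¹ = 1 := by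
        rw [← _root_.map_mul, mul_inv_cancel₀ hd, _root_.map_one]
      set β := (b - m).toNat with hβ_def
      have hβ' : (β : ℤ) = b - m := by omega
      have hβ1 : 1 ≤ β := by omega
      have hT : !![𝕏 ^ a, f; 0, 𝕏 ^ b] =
          !![1, φ p; 0, 1] * !![𝕏 ^ a, 𝕏 ^ m * ψ V; 0, 𝕏 ^ b] * !![1, ψ q; 0, 1] :=
        (conj_red (𝕏 ^ a) (𝕏 ^ b) (𝕏 ^ m * ψ V) (φ p) (ψ q) f (by rw [hf']; ring)).symm
      rw [hT]
      refine SplitsM.conj ?_ (isA_red p) (isB_red q)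
      by_cases hVC : V - Polynomial.C d = 0
      · -- middle term is a monomial
        have hV : ψ V = RatFunc.C d := by rw [sub_eq_zero.1 hVC, ψ_C]
        set M := (m - a).toNat with hM_def
        have hM' : (M : ℤ) = m - a := by omega
        have hTw : !![𝕏 ^ a, 𝕏 ^ m * ψ V; 0, 𝕏 ^ b] =
            !![𝕏 ^ a, 𝕏 ^ a * 𝕏 ^ M * RatFunc.C d; 0, 𝕏 ^ a * 𝕏 ^ (M + β)] := by
          refine matrix_eq_fin_two rfl ?_ rfl (zpow_split (by omega))
          rw [hV, zpow_split (a := a) (k := M) (m := m) (by omega)]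
        rw [hTw, sandwich (M := !![𝕏 ^ a, 𝕏 ^ a * 𝕏 ^ M * RatFunc.C d; 0, 𝕏 ^ a * 𝕏 ^ (M + β)])
          (A1_inv (RatFunc.C d) (RatFunc.C d⁻¹) (𝕏 ^ β) hCd)
          (Bp0_inv (RatFunc.C d) (RatFunc.C d⁻¹) hCd),
          calc0 (𝕏 ^ a) 𝕏 (RatFunc.C d) (RatFunc.C d⁻¹) M β hCd]
        have hA₁ : IsA !![RatFunc.C d, 0; 𝕏 ^ β, 1] := by
          refine ⟨entry_fin_two (MemPolyX.c d) MemPolyX.zero (MemPolyX.powX β) MemPolyX.one,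
            d, hd, ?_⟩
          rw [Matrix.det_fin_two_of]
          ring
        have hBp0inv : IsB !![0, 1; -(RatFunc.C d⁻¹), 0] := by
          refine ⟨entry_fin_two MemPolyXInv.zero MemPolyXInv.one (MemPolyXInv.c d⁻¹).neg
            MemPolyXInv.zero, d⁻¹, inv_ne_zero hd, ?_⟩
          rw [Matrix.det_fin_two_of]
          ring
        refine SplitsM.conj ?_ hA₁ hBp0inv
        have hQ : !![𝕏 ^ a * 𝕏 ^ M, -(𝕏 ^ a); 0, 𝕏 ^ a * 𝕏 ^ β] =
            !![𝕏 ^ m, -(𝕏 ^ a); 0, 𝕏 ^ (a + β)] :=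
          matrix_eq_fin_two (zpow_split (by omega)).symm rfl rfl (zpow_split (by omega)).symm
        rw [hQ]
        exact ih m (a + β) _ (MemLaurent.zpowX a).neg (by omega)
      · -- general middle term : balancing step
        obtain ⟨k, U, hfac, hU0, hUdeg⟩ := trailing_fact _ hVC
        have hdegVC : (V - Polynomial.C d).natDegree = V.natDegree := Polynomial.natDegree_sub_C
        have hk1 : 1 ≤ k := by
          rcases Nat.eq_zero_or_pos k with hk | hk
          · exfalso
            apply hU0
            have h0 : (V - Polynomial.C d).coeff 0 = 0 := by
              rw [Polynomial.coeff_sub, Polynomial.coeff_C_zero, ← hd_def, sub_self]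
            rw [hfac, hk, pow_zero, one_mul] at h0
            exact h0
          · omega
        have hklt : (k : ℤ) < m - a := by
          have : k ≤ (V - Polynomial.C d).natDegree := by omega
          omega
        set N := (m - a - k).toNat with hN_def
        have hN' : (N : ℤ) = m - a - k := by omega
        have hVdec : ψ V = RatFunc.C d + (𝕏⁻¹) ^ k * ψ U := by
          have hVeq : V = Polynomial.C d + Polynomial.X ^ k * U := by
            rw [← hfac]; ring
          rw [hVeq, ψ_add, ψ_C, ψ_mul, ψ_pow, ψ_X]
        -- Bezout over ℂ[x]
        have hXU : IsCoprime (Polynomial.X ^ N) U :=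
          ((Polynomial.prime_X.coprime_iff_not_dvd).2
            (fun hdvd => hU0 (Polynomial.X_dvd_iff.1 hdvd))).pow_left
        obtain ⟨s1, s2, hbez⟩ := hXU
        have hBez : ψ U * ψ s2 + (𝕏⁻¹) ^ N * ψ s1 = 1 := by
          have h9 := congrArg ψ hbez
          rw [ψ_add, ψ_mul, ψ_mul, ψ_pow, ψ_X, ψ_one] at h9
          linear_combination h9
        have hTw : !![𝕏 ^ a, 𝕏 ^ m * ψ V; 0, 𝕏 ^ b] =
            !![𝕏 ^ a, 𝕏 ^ a * 𝕏 ^ (k + N) * (RatFunc.C d + (𝕏⁻¹) ^ k * ψ U);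
               0, 𝕏 ^ a * 𝕏 ^ (k + N + β)] := by
          refine matrix_eq_fin_two rfl ?_ rfl (zpow_split (by omega))
          rw [hVdec, zpow_split (a := a) (k := k + N) (m := m) (by omega)]
        rw [hTw, sandwich (M := !![𝕏 ^ a, 𝕏 ^ a * 𝕏 ^ (k + N) * (RatFunc.C d + (𝕏⁻¹) ^ k * ψ U);
               0, 𝕏 ^ a * 𝕏 ^ (k + N + β)])
          (A1_inv (RatFunc.C d) (RatFunc.C d⁻¹) (𝕏 ^ β) hCd)
          (Bp1_inv (RatFunc.C d) (RatFunc.C d⁻¹) (ψ U) (ψ s2) (ψ s1) (𝕏⁻¹) N hCd hBez),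
          calc1 (𝕏 ^ a) 𝕏 (𝕏⁻¹) (RatFunc.C d) (RatFunc.C d⁻¹) (ψ U) (ψ s2) (ψ s1) k N β
            (mul_inv_cancel₀ Xne) hCd hBez]
        have hA₁ : IsA !![RatFunc.C d, 0; 𝕏 ^ β, 1] := by
          refine ⟨entry_fin_two (MemPolyX.c d) MemPolyX.zero (MemPolyX.powX β) MemPolyX.one,
            d, hd, ?_⟩
          rw [Matrix.det_fin_two_of]
          ring
        have hBp1inv : IsB !![-(ψ s2), ψ s1;
            -(RatFunc.C d⁻¹ * (𝕏⁻¹) ^ N), -(RatFunc.C d⁻¹ * ψ U)] := by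
          refine ⟨entry_fin_two ((memPolyXInv_def.2 ⟨s2, rfl⟩).neg) (memPolyXInv_def.2 ⟨s1, rfl⟩)
            (((MemPolyXInv.c d⁻¹).mul (MemPolyXInv.powXinv N)).neg)
            (((MemPolyXInv.c d⁻¹).mul (memPolyXInv_def.2 ⟨U, rfl⟩)).neg),
            d⁻¹, inv_ne_zero hd, ?_⟩
          rw [Matrix.det_fin_two_of]
          linear_combination (RatFunc.C d⁻¹) * hBez
        refine SplitsM.conj ?_ hA₁ hBp1inv
        have hf₃L : MemLaurent (-(𝕏 ^ a * 𝕏 ^ (k + N) * (RatFunc.C d + (𝕏⁻¹) ^ k * ψ U) * ψ s2 +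
            𝕏 ^ a * ψ s1)) := by
          refine MemLaurent.neg (MemLaurent.add ?_ ?_)
          · exact (((MemLaurent.zpowX a).mul (MemLaurent.powX (k + N))).mul
              ((MemLaurent.c d).add ((MemLaurent.powXinv k).mul (MemLaurent.psi U)))).mul
              (MemLaurent.psi s2)
          · exact (MemLaurent.zpowX a).mul (MemLaurent.psi s1)
        have hQ : !![𝕏 ^ a * 𝕏 ^ k,
              -(𝕏 ^ a * 𝕏 ^ (k + N) * (RatFunc.C d + (𝕏⁻¹) ^ k * ψ U) * ψ s2 + 𝕏 ^ a * ψ s1);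
              0, 𝕏 ^ a * 𝕏 ^ (N + β)] =
            !![𝕏 ^ (a + k),
              -(𝕏 ^ a * 𝕏 ^ (k + N) * (RatFunc.C d + (𝕏⁻¹) ^ k * ψ U) * ψ s2 + 𝕏 ^ a * ψ s1);
              0, 𝕏 ^ (a + (N + β))] :=
          matrix_eq_fin_two (zpow_split (by omega)).symm rfl rfl (zpow_split (by omega)).symm
        rw [hQ]
        exact ih (a + k) (a + (N + β)) _ hf₃L (by omega)

/-! ### Phase 1 : triangularization, and the main theorem -/

lemma MemLaurent.sub {f g : 𝕂} (hf : MemLaurent f) (hg : MemLaurent g) : MemLaurent (f - g) := by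
  rw [sub_eq_add_neg]; exact hf.add hg.neg

lemma isA_one : IsA (1 : M2) := by
  refine ⟨fun i j => ?_, 1, one_ne_zero, by rw [Matrix.det_one, _root_.map_one]⟩
  rw [one_fin_two']
  exact entry_fin_two MemPolyX.one MemPolyX.zero MemPolyX.zero MemPolyX.one i j

lemma SplitsM.mulB {M B : M2} (h : SplitsM M) (hB : IsB B) : SplitsM (M * B) := by
  have h2 := h.conj isA_one hB
  rwa [Matrix.one_mul] at h2

lemma phase1 (G : M2) (hG : IsUnit G.det) (hGL : ∀ i j, MemLaurent (G i j))
    (hGL' : ∀ i j, MemLaurent (G⁻¹ i j)) :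
    ∃ (B : M2) (a b : ℤ) (f : 𝕂), IsB B ∧ MemLaurent f ∧ G * B = !![𝕏 ^ a, f; 0, 𝕏 ^ b] := by
  -- classification of det G
  have hdetL : MemLaurent G.det := by
    rw [Matrix.det_fin_two]
    exact ((hGL 0 0).mul (hGL 1 1)).sub ((hGL 0 1).mul (hGL 1 0))
  have hdetL' : MemLaurent G⁻¹.det := by
    rw [Matrix.det_fin_two]
    exact ((hGL' 0 0).mul (hGL' 1 1)).sub ((hGL' 0 1).mul (hGL' 1 0))
  have hdet1 : G.det * G⁻¹.det = 1 := by
    rw [← Matrix.det_mul, Matrix.mul_nonsing_inv _ hG, Matrix.det_one]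
  obtain ⟨c, e, hc, hdetG⟩ := laurent_unit hdetL hdetL' hdet1
  -- bottom row in common ψ-form
  obtain ⟨t, u, v, hu, hv⟩ := (hGL 1 0).psi_form₂ (hGL 1 1)
  have huv : ¬(u = 0 ∧ v = 0) := by
    rintro ⟨rfl, rfl⟩
    have hz : G.det = 0 := by
      rw [Matrix.det_fin_two, hu, hv, ψ_zero, mul_zero, mul_zero, mul_zero, sub_zero]
    rw [hdetG] at hz
    exact (mul_ne_zero (C_ne_zero' hc) (zpow_ne_zero _ Xne)) hz
  have hδ : EuclideanDomain.gcd u v ≠ 0 := fun h =>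
    huv (EuclideanDomain.gcd_eq_zero_iff.1 h)
  set δ := EuclideanDomain.gcd u v with hδ_def
  obtain ⟨w₁, hw₁⟩ : δ ∣ u := EuclideanDomain.gcd_dvd_left u v
  obtain ⟨w₂, hw₂⟩ : δ ∣ v := EuclideanDomain.gcd_dvd_right u v
  have hbez : δ = u * EuclideanDomain.gcdA u v + v * EuclideanDomain.gcdB u v :=
    EuclideanDomain.gcd_eq_gcd_ab u v
  set gA := EuclideanDomain.gcdA u v with hgA_def
  set gB := EuclideanDomain.gcdB u v with hgB_def
  have hw12 : w₁ * gA + w₂ * gB = 1 := by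
    refine mul_left_cancel₀ hδ ?_
    rw [mul_one]
    calc δ * (w₁ * gA + w₂ * gB) = (δ * w₁) * gA + (δ * w₂) * gB := by ring
      _ = u * gA + v * gB := by rw [← hw₁, ← hw₂]
      _ = δ := hbez.symm
  have hψ12 : ψ w₁ * ψ gA + ψ w₂ * ψ gB = 1 := by
    have h9 := congrArg ψ hw12
    rw [ψ_add, ψ_mul, ψ_mul, ψ_one] at h9
    exact h9
  -- the column operation matrix
  set B₀ : M2 := !![-(ψ w₂), ψ gA; ψ w₁, ψ gB] with hB₀_def
  have hB₀ : IsB B₀ := by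
    refine ⟨entry_fin_two (memPolyXInv_def.2 ⟨w₂, rfl⟩).neg (memPolyXInv_def.2 ⟨gA, rfl⟩)
      (memPolyXInv_def.2 ⟨w₁, rfl⟩) (memPolyXInv_def.2 ⟨gB, rfl⟩), -1, neg_ne_zero.2 one_ne_zero, ?_⟩
    rw [hB₀_def, Matrix.det_fin_two_of, show (RatFunc.C (-1) : 𝕂) = -1 by
      rw [map_neg, _root_.map_one]]
    linear_combination -hψ12
  set T := G * B₀ with hT_def
  have hB00 : B₀ 0 0 = -(ψ w₂) := rfl
  have hB10 : B₀ 1 0 = ψ w₁ := rfl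
  have hB01 : B₀ 0 1 = ψ gA := rfl
  have hB11 : B₀ 1 1 = ψ gB := rfl
  have hT10 : T 1 0 = 0 := by
    rw [hT_def, mul_entry, hB00, hB10, hu, hv, hw₁, hw₂, ψ_mul, ψ_mul]
    ring
  have hT11 : T 1 1 = 𝕏 ^ t * ψ δ := by
    rw [hT_def, mul_entry, hB01, hB11, hu, hv]
    have h9 := congrArg ψ hbez
    rw [ψ_add, ψ_mul, ψ_mul] at h9
    linear_combination (-(𝕏 ^ t)) * h9
  have hTL : ∀ i j, MemLaurent (T i j) := by
    intro i j
    rw [hT_def, mul_entry]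
    have hBL : ∀ i j, MemLaurent (B₀ i j) := by
      rw [hB₀_def]
      exact entry_fin_two (MemLaurent.psi w₂).neg (MemLaurent.psi gA) (MemLaurent.psi w₁)
        (MemLaurent.psi gB)
    exact ((hGL i 0).mul (hBL 0 j)).add ((hGL i 1).mul (hBL 1 j))
  have hdetT : T 0 0 * T 1 1 = RatFunc.C (-c) * 𝕏 ^ e := by
    have h9 : T.det = G.det * B₀.det := Matrix.det_mul _ _
    rw [Matrix.det_fin_two, hT10, mul_zero, sub_zero] at h9
    rw [h9, hdetG]
    obtain ⟨-, c', -, hdetB⟩ := hB₀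
    -- we know det B₀ explicitly
    have hdetB' : B₀.det = -1 := by
      rw [hB₀_def, Matrix.det_fin_two_of]
      linear_combination -hψ12
    rw [hdetB', show (RatFunc.C (-c) : 𝕂) = -(RatFunc.C c) by rw [map_neg]]
    ring
  -- classify T 1 1
  obtain ⟨c₂, b, hc₂, hT11'⟩ := laurent_unit' (hTL 1 1) (hTL 0 0) (neg_ne_zero.2 hc)
    (by rw [mul_comm]; exact hdetT)
  -- deduce T 0 0
  have hT11ne : (RatFunc.C c₂ : 𝕂) * 𝕏 ^ b ≠ 0 :=
    mul_ne_zero (C_ne_zero' hc₂) (zpow_ne_zero _ Xne)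
  have hT00 : T 0 0 = RatFunc.C (-c * c₂⁻¹) * 𝕏 ^ (e - b) := by
    have h9 : T 0 0 * (RatFunc.C c₂ * 𝕏 ^ b) = RatFunc.C (-c) * 𝕏 ^ e := by
      rw [← hT11']; exact hdetT
    have h10 : (RatFunc.C (-c * c₂⁻¹) * 𝕏 ^ (e - b)) * (RatFunc.C c₂ * 𝕏 ^ b) =
        RatFunc.C (-c) * 𝕏 ^ e := by
      rw [mul_mul_mul_comm, ← _root_.map_mul, ← zpow_add₀ Xne]
      rw [show -c * c₂⁻¹ * c₂ = -c by field_simp, show e - b + b = e by ring]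
    exact mul_right_cancel₀ hT11ne (by rw [h9, h10])
  have hc₁ : -c * c₂⁻¹ ≠ 0 := mul_ne_zero (neg_ne_zero.2 hc) (inv_ne_zero hc₂)
  -- normalize the diagonal
  refine ⟨B₀ * !![RatFunc.C (-c * c₂⁻¹)⁻¹, 0; 0, RatFunc.C c₂⁻¹], e - b, b,
    T 0 1 * RatFunc.C c₂⁻¹, ?_, (hTL 0 1).mul (MemLaurent.c _), ?_⟩
  · refine hB₀.mul ⟨entry_fin_two (MemPolyXInv.c _) MemPolyXInv.zero MemPolyXInv.zero
      (MemPolyXInv.c _), (-c * c₂⁻¹)⁻¹ * c₂⁻¹, mul_ne_zero (inv_ne_zero hc₁) (inv_ne_zero hc₂), ?_⟩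
    rw [Matrix.det_fin_two_of, ← _root_.map_mul]
    ring_nf
  · have hCc₁ : RatFunc.C (-c * c₂⁻¹) * RatFunc.C (-c * c₂⁻¹)⁻¹ = 1 := by
      rw [← _root_.map_mul, mul_inv_cancel₀ hc₁, _root_.map_one]
    have hCc₂ : RatFunc.C c₂ * RatFunc.C c₂⁻¹ = 1 := by
      rw [← _root_.map_mul, mul_inv_cancel₀ hc₂, _root_.map_one]
    have hTN : T * !![RatFunc.C (-c * c₂⁻¹)⁻¹, 0; 0, RatFunc.C c₂⁻¹] =
        !![T 0 0 * RatFunc.C (-c * c₂⁻¹)⁻¹, T 0 1 * RatFunc.C c₂⁻¹;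
           T 1 0 * RatFunc.C (-c * c₂⁻¹)⁻¹, T 1 1 * RatFunc.C c₂⁻¹] := by
      ext i j
      fin_cases i <;> fin_cases j <;> simp [mul_entry]
    rw [← Matrix.mul_assoc, ← hT_def, hTN]
    refine matrix_eq_fin_two ?_ rfl ?_ ?_
    · rw [hT00]; linear_combination (𝕏 ^ (e - b)) * hCc₁
    · rw [hT10]; ring
    · rw [hT11']; linear_combination (𝕏 ^ b) * hCc₂

end

/-- Grothendieck splitting in transition-function form.  If `G` is an
invertible `2×2` matrix over `ℂ(x)` whose entries, together with those of `G⁻¹`, are Laurent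
polynomials, then there are matrices `A` (polynomial entries, constant nonzero determinant),
`B` (entries polynomial in `x⁻¹`, constant nonzero determinant) and integers `e₁, e₂` with
`A⁻¹ * G * B = !![x^e₁, 0; 0, x^e₂]`. -/
theorem stmt7 (G : Matrix (Fin 2) (Fin 2) (RatFunc ℂ)) (hG : IsUnit G.det)
    (hGL : ∀ i j, MemLaurent (G i j)) (hGL' : ∀ i j, MemLaurent (G⁻¹ i j)) :
    ∃ (A B : Matrix (Fin 2) (Fin 2) (RatFunc ℂ)) (e₁ e₂ : ℤ),
      (∀ i j, MemPolyX (A i j)) ∧ (∃ c : ℂ, c ≠ 0 ∧ A.det = RatFunc.C c) ∧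
      (∀ i j, MemPolyXInv (B i j)) ∧ (∃ c : ℂ, c ≠ 0 ∧ B.det = RatFunc.C c) ∧
      A⁻¹ * G * B = !![(RatFunc.X : RatFunc ℂ) ^ e₁, 0; 0, (RatFunc.X : RatFunc ℂ) ^ e₂] := by
  obtain ⟨B₀, a, b, f, hB₀, hfL, hGB⟩ := phase1 G hG hGL hGL'
  have hsp : SplitsM (G * B₀) := by
    rw [hGB]
    exact tri_splits (b - a).natAbs a b f hfL le_rfl
  have hG' : SplitsM G := by
    have h2 : G = (G * B₀) * B₀⁻¹ := by
      rw [Matrix.mul_assoc, Matrix.mul_nonsing_inv _ hB₀.detUnit, Matrix.mul_one]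
    rw [h2]
    exact hsp.mulB hB₀.inv
  obtain ⟨A, B, e₁, e₂, hA, hB, hfact⟩ := hG'
  refine ⟨A, B⁻¹, e₁, e₂, hA.1, hA.2, (hB.inv).1, (hB.inv).2, ?_⟩
  rw [hfact]
  simp only [← Matrix.mul_assoc]
  rw [Matrix.nonsing_inv_mul _ hA.detUnit, Matrix.one_mul, Matrix.mul_assoc,
    Matrix.mul_nonsing_inv _ hB.detUnit, Matrix.mul_one]
end

section
/- Let K be a field and b, c, x ∈ K with 4·b·c = −1 and b·x − c ≠ 0. Set A := [[c + b·x, (b·x − c)²],[1, c + b·x]]. Then for every integer n ≥ 1, Aⁿ = 2^{n−1} · [[bⁿxⁿ + cⁿ, (b·x − c)·(bⁿxⁿ − cⁿ)],[(bⁿxⁿ − cⁿ)/(b·x − c), bⁿxⁿ + cⁿ]]. -/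
/-- matrix power formula from the proof of Proposition 7.1.  Over a field
`K`, if `4bc = −1` and `bx − c ≠ 0`, then for `A := !![c + bx, (bx − c)²; 1, c + bx]` and every
`n ≥ 1`,
`Aⁿ = 2^{n−1} • !![bⁿxⁿ + cⁿ, (bx − c)(bⁿxⁿ − cⁿ); (bⁿxⁿ − cⁿ)/(bx − c), bⁿxⁿ + cⁿ]`. -/
theorem stmt10 {K : Type*} [Field K] (b c x : K) (h : 4 * b * c = -1)
    (hx : b * x - c ≠ 0) (n : ℕ) (hn : 1 ≤ n) :
    (!![c + b * x, (b * x - c) ^ 2; 1, c + b * x] : Matrix (Fin 2) (Fin 2) K) ^ n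
      = ((2 : K) ^ (n - 1)) •
        !![b ^ n * x ^ n + c ^ n, (b * x - c) * (b ^ n * x ^ n - c ^ n);
           (b ^ n * x ^ n - c ^ n) / (b * x - c), b ^ n * x ^ n + c ^ n] := by
  induction n, hn using Nat.le_induction with
  | base =>
    simp only [pow_one, Nat.sub_self, pow_zero, one_smul]
    ext i j
    fin_cases i <;> fin_cases j <;> simp <;> first | ring1 | rw [div_self hx]
  | succ n hn ih =>
    rw [pow_succ, ih]
    have h3 : (2 : K) ^ n = 2 ^ (n - 1) * 2 := by
      rw [← pow_succ]; congr 1; omega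
    have h2 : n + 1 - 1 = n := by omega
    rw [h2]
    ext i j
    fin_cases i <;> fin_cases j <;>
      · simp only [Matrix.mul_apply, Fin.sum_univ_two, Matrix.smul_apply,
          Matrix.cons_val', Matrix.cons_val_zero, Matrix.cons_val_one,
          Matrix.head_cons, Matrix.head_fin_const, Matrix.empty_val',
          Matrix.cons_val_fin_one, smul_eq_mul, Matrix.of_apply, Fin.zero_eta, Fin.mk_one]
        field_simp
        rw [h3]
        ring
end

section
/- Let K := ℂ(x) be the field of rational functions over ℂ in the variable x, and let b, c ∈ ℂ satisfy 4·b·c = −1 (so b ≠ 0 and c ≠ 0). Set A := [[c + b·x, (b·x − c)²],[1, c + b·x]] and G⁰ := [[1, 0],[0, x⁻¹]], 2×2 matrices over K. For an integer n ≥ 1 define Q₁′ := [[1, −(b·x − c)],[−(bⁿxⁿ − cⁿ)/(2cⁿ·(b·x − c)), (bⁿxⁿ + cⁿ)/(2cⁿ)]] and Q₂ := [[1, b − c·x⁻¹],[0, 1]]. Then: (i) all entries of Q₁′ lie in the polynomial subring ℂ[x] ⊂ K and det Q₁′ = 1; (ii) all entries of Q₂ and of Q₂⁻¹ lie in the subring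 ℂ[x⁻¹] ⊂ K of polynomials in x⁻¹; and (iii) Q₁′ · Aⁿ · G⁰ · Q₂ = [[(2c)ⁿ, 0],[0, (2b)ⁿ · x^{n−1}]]. -/
lemma matA_pow {K : Type*} [Field K] (s u : K) (hu : u ≠ 0) (h2 : (2:K) ≠ 0) (n : ℕ) :
    (!![s, u^2; 1, s] : Matrix (Fin 2) (Fin 2) K) ^ n =
      !![((s+u)^n + (s-u)^n)/2, u * (((s+u)^n - (s-u)^n)/2);
         ((s+u)^n - (s-u)^n)/(2*u), ((s+u)^n + (s-u)^n)/2] := by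
  induction n with
  | zero =>
    rw [pow_zero]
    norm_num [div_self h2]
    exact Matrix.one_fin_two
  | succ m ih =>
    rw [pow_succ, ih, Matrix.mul_fin_two]
    ext i j
    fin_cases i <;> fin_cases j <;> simp <;> field_simp <;> ring

set_option maxHeartbeats 2000000 in
/-- explicit diagonalization in the proof of Proposition 7.1.  In
`K = ℂ(x)`, with `4bc = −1`, `A := !![C c + C b·X, (C b·X − C c)²; 1, C c + C b·X]`,
`G⁰ := !![1, 0; 0, X⁻¹]`, and for `n ≥ 1` the matrices `Q₁′`, `Q₂` as displayed:
`Q₁′` has polynomial entries and determinant `1`, `Q₂` and `Q₂⁻¹` have entries polynomial in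
`x⁻¹`, and `Q₁′ · Aⁿ · G⁰ · Q₂ = !![(2c)ⁿ, 0; 0, (2b)ⁿ·x^{n−1}]`. -/
theorem stmt11 (b c : ℂ) (h : 4 * b * c = -1) (n : ℕ) (hn : 1 ≤ n)
    (A G₀ Q₁ Q₂ : Matrix (Fin 2) (Fin 2) (RatFunc ℂ))
    (hA : A = !![RatFunc.C c + RatFunc.C b * RatFunc.X,
        (RatFunc.C b * RatFunc.X - RatFunc.C c) ^ 2;
        1, RatFunc.C c + RatFunc.C b * RatFunc.X])
    (hG₀ : G₀ = !![1, 0; 0, (RatFunc.X : RatFunc ℂ)⁻¹])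
    (hQ₁ : Q₁ = !![1, -(RatFunc.C b * RatFunc.X - RatFunc.C c);
        -(((RatFunc.C b) ^ n * RatFunc.X ^ n - (RatFunc.C c) ^ n) /
          (2 * (RatFunc.C c) ^ n * (RatFunc.C b * RatFunc.X - RatFunc.C c))),
        ((RatFunc.C b) ^ n * RatFunc.X ^ n + (RatFunc.C c) ^ n) / (2 * (RatFunc.C c) ^ n)])
    (hQ₂ : Q₂ = !![1, RatFunc.C b - RatFunc.C c * (RatFunc.X : RatFunc ℂ)⁻¹; 0, 1]) :
    (∀ i j, MemPolyX (Q₁ i j)) ∧ Q₁.det = 1 ∧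
    (∀ i j, MemPolyXInv (Q₂ i j)) ∧ (∀ i j, MemPolyXInv (Q₂⁻¹ i j)) ∧
    Q₁ * A ^ n * G₀ * Q₂
      = !![(2 * RatFunc.C c) ^ n, 0;
           0, (2 * RatFunc.C b) ^ n * RatFunc.X ^ (n - 1)] := by
  have hb : b ≠ 0 := by rintro rfl; norm_num at h
  have hc : c ≠ 0 := by rintro rfl; norm_num at h
  have hbb : RatFunc.C b ≠ 0 := by
    simpa [RatFunc.algebraMap_C] using
      RatFunc.algebraMap_ne_zero (Polynomial.C_ne_zero.mpr hb)
  have hcc : RatFunc.C c ≠ 0 := by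
    simpa [RatFunc.algebraMap_C] using
      RatFunc.algebraMap_ne_zero (Polynomial.C_ne_zero.mpr hc)
  have hX : (RatFunc.X : RatFunc ℂ) ≠ 0 := RatFunc.X_ne_zero
  have h2 : (2 : RatFunc ℂ) ≠ 0 := by
    have h2' : RatFunc.C (2:ℂ) ≠ 0 := by
      simpa [RatFunc.algebraMap_C] using
        RatFunc.algebraMap_ne_zero (Polynomial.C_ne_zero.mpr (by norm_num : (2:ℂ) ≠ 0))
    rwa [show RatFunc.C (2:ℂ) = (2 : RatFunc ℂ) from map_ofNat _ 2] at h2'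
  have hu : RatFunc.C b * RatFunc.X - RatFunc.C c ≠ 0 := by
    have hpoly : (Polynomial.C b * Polynomial.X - Polynomial.C c : Polynomial ℂ) ≠ 0 := by
      intro h0
      have := congrArg (fun p => Polynomial.coeff p 1) h0
      simp at this
      exact hb this
    simpa [map_sub, map_mul, RatFunc.algebraMap_C, RatFunc.algebraMap_X] using
      RatFunc.algebraMap_ne_zero hpoly
  have hgeo := geom_sum₂_mul (RatFunc.C b * RatFunc.X) (RatFunc.C c) n
  have hbx : (RatFunc.C b)^n * RatFunc.X^n = (RatFunc.C b * RatFunc.X)^n := (mul_pow _ _ _).symm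
  have hccn := pow_ne_zero n hcc
  have hQ₁' : Q₁ = !![1, -(RatFunc.C b * RatFunc.X - RatFunc.C c);
      -((∑ i ∈ Finset.range n, (RatFunc.C b * RatFunc.X) ^ i * RatFunc.C c ^ (n - 1 - i)) /
        (2 * (RatFunc.C c) ^ n)),
      ((RatFunc.C b) ^ n * RatFunc.X ^ n + (RatFunc.C c) ^ n) / (2 * (RatFunc.C c) ^ n)] := by
    rw [hQ₁]
    ext i j
    fin_cases i <;> fin_cases j <;>
      simp only [Matrix.cons_val_zero, Matrix.cons_val_one, Matrix.head_cons,
        Matrix.of_apply, Matrix.cons_val', Matrix.empty_val', Matrix.cons_val_fin_one,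
        Matrix.head_fin_const, Fin.zero_eta, Fin.mk_one]
    rw [hbx, ← hgeo]
    field_simp
  refine ⟨?_, ?_, ?_, ?_, ?_⟩
  · -- Q₁ entries polynomial
    rw [hQ₁]
    intro i j
    fin_cases i <;> fin_cases j
    · exact ⟨1, by simp⟩
    · exact ⟨-(Polynomial.C b * Polynomial.X - Polynomial.C c), by
        simp [map_sub, map_mul, map_neg, RatFunc.algebraMap_C, RatFunc.algebraMap_X]⟩
    · refine ⟨-(Polynomial.C ((2*c^n)⁻¹) *
        ∑ i ∈ Finset.range n, (Polynomial.C b * Polynomial.X)^i * (Polynomial.C c)^(n-1-i)), ?_⟩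
      have hmap : algebraMap (Polynomial ℂ) (RatFunc ℂ)
          (-(Polynomial.C ((2*c^n)⁻¹) *
          ∑ i ∈ Finset.range n, (Polynomial.C b * Polynomial.X)^i * (Polynomial.C c)^(n-1-i)))
          = -((2 * (RatFunc.C c)^n)⁻¹ *
          ∑ i ∈ Finset.range n, (RatFunc.C b * RatFunc.X)^i * (RatFunc.C c)^(n-1-i)) := by
        push_cast [map_neg, map_mul, map_sum, map_pow, RatFunc.algebraMap_C,
          RatFunc.algebraMap_X, map_inv₀, map_ofNat]
        rfl
      rw [hmap]
      simp only [Fin.zero_eta, Fin.mk_one, Matrix.cons_val', Matrix.cons_val_zero,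
        Matrix.cons_val_one, Matrix.head_cons, Matrix.head_fin_const, Matrix.empty_val',
        Matrix.cons_val_fin_one, Matrix.of_apply]
      rw [hbx, ← hgeo]
      field_simp
    · refine ⟨Polynomial.C ((2*c^n)⁻¹) *
        ((Polynomial.C b * Polynomial.X)^n + (Polynomial.C c)^n), ?_⟩
      have hmap : algebraMap (Polynomial ℂ) (RatFunc ℂ)
          (Polynomial.C ((2*c^n)⁻¹) * ((Polynomial.C b * Polynomial.X)^n + (Polynomial.C c)^n))
          = (2 * (RatFunc.C c)^n)⁻¹ * ((RatFunc.C b * RatFunc.X)^n + (RatFunc.C c)^n) := by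
        push_cast [map_add, map_mul, map_pow, RatFunc.algebraMap_C,
          RatFunc.algebraMap_X, map_inv₀, map_ofNat]
        rfl
      rw [hmap]
      simp only [Fin.zero_eta, Fin.mk_one, Matrix.cons_val', Matrix.cons_val_zero,
        Matrix.cons_val_one, Matrix.head_cons, Matrix.head_fin_const, Matrix.empty_val',
        Matrix.cons_val_fin_one, Matrix.of_apply]
      rw [hbx]
      field_simp
  · rw [hQ₁', Matrix.det_fin_two_of, hbx]
    field_simp
    linear_combination -hgeo
  · rw [hQ₂]
    intro i j
    fin_cases i <;> fin_cases j
    · exact ⟨1, by simp⟩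
    · exact ⟨Polynomial.C b - Polynomial.C c * Polynomial.X, by
        simp [map_sub, map_mul, Polynomial.aeval_C, Polynomial.aeval_X,
          RatFunc.algebraMap_eq_C]⟩
    · exact ⟨0, by simp⟩
    · exact ⟨1, by simp⟩
  · have hQ₂inv : Q₂⁻¹ = !![1, -(RatFunc.C b - RatFunc.C c * (RatFunc.X : RatFunc ℂ)⁻¹); 0, 1] := by
      apply Matrix.inv_eq_right_inv
      rw [hQ₂, Matrix.mul_fin_two]
      norm_num
      exact Matrix.one_fin_two.symm
    rw [hQ₂inv]
    intro i j
    fin_cases i <;> fin_cases j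
    · exact ⟨1, by simp⟩
    · exact ⟨-(Polynomial.C b - Polynomial.C c * Polynomial.X), by
        simp [map_sub, map_mul, map_neg, Polynomial.aeval_C, Polynomial.aeval_X,
          RatFunc.algebraMap_eq_C]⟩
    · exact ⟨0, by simp⟩
    · exact ⟨1, by simp⟩
  · obtain ⟨m, rfl⟩ : ∃ m, n = m + 1 := ⟨n - 1, (Nat.succ_pred_eq_of_pos hn).symm⟩
    simp only [Nat.add_sub_cancel] at hgeo hQ₁'
    have hAn : A ^ (m+1) =
        !![((2*RatFunc.C b*RatFunc.X)^(m+1) + (2*RatFunc.C c)^(m+1))/2,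
           (RatFunc.C b * RatFunc.X - RatFunc.C c) *
             (((2*RatFunc.C b*RatFunc.X)^(m+1) - (2*RatFunc.C c)^(m+1))/2);
           ((2*RatFunc.C b*RatFunc.X)^(m+1) - (2*RatFunc.C c)^(m+1)) /
             (2*(RatFunc.C b * RatFunc.X - RatFunc.C c)),
           ((2*RatFunc.C b*RatFunc.X)^(m+1) + (2*RatFunc.C c)^(m+1))/2] := by
      rw [hA, matA_pow _ _ hu h2]
      have e1 : RatFunc.C c + RatFunc.C b * RatFunc.X + (RatFunc.C b * RatFunc.X - RatFunc.C c)
          = 2*RatFunc.C b*RatFunc.X := by ring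
      have e2 : RatFunc.C c + RatFunc.C b * RatFunc.X - (RatFunc.C b * RatFunc.X - RatFunc.C c)
          = 2*RatFunc.C c := by ring
      rw [e1, e2]
    have hAn2 : A ^ (m+1) =
        !![2^m * ((RatFunc.C b * RatFunc.X)^(m+1) + RatFunc.C c^(m+1)),
           2^m * ((RatFunc.C b * RatFunc.X - RatFunc.C c) *
             ((RatFunc.C b * RatFunc.X)^(m+1) - RatFunc.C c^(m+1)));
           2^m * ∑ i ∈ Finset.range (m+1),
             (RatFunc.C b * RatFunc.X) ^ i * RatFunc.C c ^ (m - i),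
           2^m * ((RatFunc.C b * RatFunc.X)^(m+1) + RatFunc.C c^(m+1))] := by
      rw [hAn]
      ext i j
      fin_cases i <;> fin_cases j <;>
        simp only [Matrix.cons_val_zero, Matrix.cons_val_one, Matrix.head_cons,
          Matrix.of_apply, Matrix.cons_val', Matrix.empty_val', Matrix.cons_val_fin_one,
          Matrix.head_fin_const, Fin.zero_eta, Fin.mk_one]
      · field_simp; ring
      · field_simp; ring
      · field_simp
        linear_combination (-(2:RatFunc ℂ)^(m+1)) * hgeo
      · field_simp; ring
    have hM1 : Q₁ * A ^ (m+1) =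
        !![(2*RatFunc.C c)^(m+1),
           -((RatFunc.C b * RatFunc.X - RatFunc.C c) * (2*RatFunc.C c)^(m+1));
           0, (2*RatFunc.C b*RatFunc.X)^(m+1)] := by
      rw [hQ₁', hAn2, Matrix.mul_fin_two]
      ext i j
      fin_cases i <;> fin_cases j <;>
        simp only [Matrix.cons_val_zero, Matrix.cons_val_one, Matrix.head_cons,
          Matrix.of_apply, Matrix.cons_val', Matrix.empty_val', Matrix.cons_val_fin_one,
          Matrix.head_fin_const, Fin.zero_eta, Fin.mk_one]
      · linear_combination (-(2:RatFunc ℂ)^m) * hgeo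
      · ring
      · field_simp; ring
      · have h2d : (2 * (RatFunc.C c)^(m+1) : RatFunc ℂ) ≠ 0 := mul_ne_zero h2 hccn
        rw [show
            -((∑ i ∈ Finset.range (m+1),
                (RatFunc.C b * RatFunc.X) ^ i * RatFunc.C c ^ (m - i)) /
              (2 * RatFunc.C c ^ (m+1))) *
              (2^m * ((RatFunc.C b * RatFunc.X - RatFunc.C c) *
                ((RatFunc.C b * RatFunc.X)^(m+1) - RatFunc.C c^(m+1)))) +
            (RatFunc.C b ^ (m+1) * RatFunc.X ^ (m+1) + RatFunc.C c ^ (m+1)) /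
              (2 * RatFunc.C c ^ (m+1)) *
              (2^m * ((RatFunc.C b * RatFunc.X)^(m+1) + RatFunc.C c^(m+1)))
            = (-(∑ i ∈ Finset.range (m+1),
                (RatFunc.C b * RatFunc.X) ^ i * RatFunc.C c ^ (m - i)) *
              (2^m * ((RatFunc.C b * RatFunc.X - RatFunc.C c) *
                ((RatFunc.C b * RatFunc.X)^(m+1) - RatFunc.C c^(m+1)))) +
            (RatFunc.C b ^ (m+1) * RatFunc.X ^ (m+1) + RatFunc.C c ^ (m+1)) *
              (2^m * ((RatFunc.C b * RatFunc.X)^(m+1) + RatFunc.C c^(m+1)))) /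
              (2 * RatFunc.C c ^ (m+1))
          from by ring, div_eq_iff h2d]
        linear_combination (-(2:RatFunc ℂ)^m *
          ((RatFunc.C b * RatFunc.X)^(m+1) - RatFunc.C c^(m+1))) * hgeo
    have hM2 : G₀ * Q₂ =
        !![1, RatFunc.C b - RatFunc.C c * (RatFunc.X : RatFunc ℂ)⁻¹;
           0, (RatFunc.X : RatFunc ℂ)⁻¹] := by
      rw [hG₀, hQ₂, Matrix.mul_fin_two]
      ext i j
      fin_cases i <;> fin_cases j <;>
        simp only [Matrix.cons_val_zero, Matrix.cons_val_one, Matrix.head_cons,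
          Matrix.of_apply, Matrix.cons_val', Matrix.empty_val', Matrix.cons_val_fin_one,
          Matrix.head_fin_const, Fin.zero_eta, Fin.mk_one] <;> ring
    have hassoc : Q₁ * A ^ (m+1) * G₀ * Q₂ = (Q₁ * A ^ (m+1)) * (G₀ * Q₂) := by
      rw [Matrix.mul_assoc]
    rw [hassoc, hM1, hM2, Matrix.mul_fin_two]
    have hmm : m + 1 - 1 = m := by omega
    rw [hmm]
    ext i j
    fin_cases i <;> fin_cases j <;>
      simp only [Matrix.cons_val_zero, Matrix.cons_val_one, Matrix.head_cons,
        Matrix.of_apply, Matrix.cons_val', Matrix.empty_val', Matrix.cons_val_fin_one,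
        Matrix.head_fin_const, Fin.zero_eta, Fin.mk_one] <;>
      field_simp <;> ring
end
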